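/- arXiv:1508.00496 — 8 statements merged into one kernel-verified Lean document; each statement's English description precedes it below -/
import Mathlib

section
/- Let E be a real Banach space, and let C and D be weak*-closed convex subsets of E* such that D is nonempty and bounded and there exists y ∈ L_D with sup{⟨y,c*⟩ : c* ∈ C} < +∞. Then the set Σ_C^D := {c* ∈ C : there exists x ∈ L_D with ⟨x,c*⟩ = sup{⟨x,z*⟩ : z* ∈ C}} satisfies C ⊆ norm-closure(Σ_C^D + Λ_D). -/
open Filter Topology Pointwise

open Filter Topology Pointwise NormedSpace Set

noncomputable section OSBPaux
namespace OSBPaux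

variable {E : Type*} [NormedAddCommGroup E] [NormedSpace ℝ E]

/-- Every continuous linear functional on the weak* dual is evaluation at a point. -/
lemma exists_eval_of_weakdual (F : WeakDual ℝ E →L[ℝ] ℝ) :
    ∃ x : E, ∀ v : WeakDual ℝ E, F v = v x := by
  have emb : IsEmbedding fun (v : WeakDual ℝ E) (y : E) => v y :=
    WeakBilin.isEmbedding (B := topDualPairing ℝ E) ContinuousLinearMap.coe_injective
  have h0 : F ⁻¹' (Set.Ioo (-1 : ℝ) 1) ∈ 𝓝 (0 : WeakDual ℝ E) := by
    have := F.continuous.continuousAt (x := (0 : WeakDual ℝ E))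
    apply this
    rw [map_zero]
    exact Ioo_mem_nhds (by norm_num) (by norm_num)
  rw [emb.toIsInducing.nhds_eq_comap, Filter.mem_comap] at h0
  obtain ⟨S, hS, hSsub⟩ := h0
  have hz : (fun y : E => (0 : WeakDual ℝ E) y) = (fun _ : E => (0 : ℝ)) := by
    funext y; rfl
  rw [hz, nhds_pi] at hS
  obtain ⟨I, hIfin, t, ht, hIt⟩ := Filter.mem_pi.mp hS
  have key : ∀ v : WeakDual ℝ E, (∀ i ∈ I, v i ∈ t i) → F v ∈ Set.Ioo (-1 : ℝ) 1 := by
    intro v hv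
    apply hSsub
    apply hIt
    intro i hi
    exact hv i hi
  haveI : Finite ↥I := hIfin.to_subtype
  haveI : Fintype ↥I := Fintype.ofFinite _
  set L : ↥I → (WeakDual ℝ E →ₗ[ℝ] ℝ) := fun i =>
    { toFun := fun v => v (i : E)
      map_add' := fun a b => rfl
      map_smul' := fun r a => rfl } with hL
  have hker : ⨅ i : ↥I, LinearMap.ker (L i) ≤ LinearMap.ker (F : WeakDual ℝ E →ₗ[ℝ] ℝ) := by
    intro v hvker
    have hvz : ∀ i ∈ I, v i = 0 := by
      intro i hi
      have := (Submodule.mem_iInf _).mp hvker ⟨i, hi⟩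
      exact this
    have habs : ∀ τ : ℝ, |τ * F v| < 1 := by
      intro τ
      have hmem : ∀ i ∈ I, (τ • v) i ∈ t i := by
        intro i hi
        have : (τ • v) i = τ * v i := rfl
        rw [this, hvz i hi, mul_zero]
        exact mem_of_mem_nhds (ht i)
      have := key (τ • v) hmem
      have hsm : F (τ • v) = τ * F v := by rw [map_smul]; rfl
      rw [hsm] at this
      rw [abs_lt]
      exact ⟨this.1, this.2⟩
    by_contra hFv
    have hFv' : F v ≠ 0 := hFv
    have := habs (2 / F v)
    rw [div_mul_cancel₀ 2 hFv'] at this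
    norm_num at this
  have hspan := mem_span_of_iInf_ker_le_ker (𝕜 := ℝ) (L := L)
    (K := (F : WeakDual ℝ E →ₗ[ℝ] ℝ)) hker
  obtain ⟨c, hc⟩ := (Submodule.mem_span_range_iff_exists_fun ℝ).1 hspan
  refine ⟨∑ i : ↥I, c i • (i : E), fun v => ?_⟩
  have := congrFun (congrArg (fun (g : WeakDual ℝ E →ₗ[ℝ] ℝ) => (g : WeakDual ℝ E → ℝ)) hc) v
  simp only [LinearMap.coe_sum, Finset.sum_apply, LinearMap.smul_apply] at this
  have hFv : F v = ∑ x : ↥I, c x • (L x) v := this.symm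
  rw [hFv, map_sum]
  apply Finset.sum_congr rfl
  intro i _
  have : v (c i • (i : E)) = c i * v (i : E) := by
    rw [map_smul]; rfl
  rw [this]
  rfl

/-- A weak*-closed convex set contains every functional dominated by its upper bounds. -/
lemma mem_of_forall_ub {C : Set (StrongDual ℝ E)}
    (hCcl : IsClosed (StrongDual.toWeakDual '' C)) (hCconv : Convex ℝ C)
    {v : StrongDual ℝ E}
    (hv : ∀ (w : E) (b : ℝ), (∀ c ∈ C, c w ≤ b) → v w ≤ b) : v ∈ C := by
  haveI : LocallyConvexSpace ℝ (WeakDual ℝ E) :=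
    WeakBilin.locallyConvexSpace (B := topDualPairing ℝ E)
  by_contra hvC
  have himg : StrongDual.toWeakDual v ∉ StrongDual.toWeakDual '' C := by
    rintro ⟨c, hc, hcv⟩
    rw [EmbeddingLike.apply_eq_iff_eq] at hcv
    exact hvC (hcv ▸ hc)
  have hconv : Convex ℝ (StrongDual.toWeakDual '' C) :=
    hCconv.linear_image (StrongDual.toWeakDual (𝕜 := ℝ) (E := E)).toLinearMap
  obtain ⟨F, s, hFC, hFv⟩ := geometric_hahn_banach_closed_point hconv hCcl himg
  obtain ⟨x, hx⟩ := exists_eval_of_weakdual F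
  have hub : ∀ c ∈ C, c x ≤ s := by
    intro c hc
    have h1 := hFC _ ⟨c, hc, rfl⟩
    rw [hx] at h1
    exact le_of_lt h1
  have h2 := hv x s hub
  rw [hx] at hFv
  have h3 : (StrongDual.toWeakDual v) x = v x := rfl
  rw [h3] at hFv
  exact lt_irrefl _ (lt_of_lt_of_le hFv h2)


def qD (D : Set (StrongDual ℝ E)) (w : E) : ℝ := sSup ((fun d => d w) '' D)

variable {D : Set (StrongDual ℝ E)} {M : ℝ}

lemma qD_bdd (hM : ∀ d ∈ D, ‖d‖ ≤ M) (w : E) :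
    BddAbove ((fun d => d w) '' D) := by
  refine ⟨M * ‖w‖, ?_⟩
  rintro _ ⟨d, hd, rfl⟩
  have h1 : d w ≤ ‖d w‖ := le_trans (le_abs_self _) (le_of_eq (Real.norm_eq_abs _).symm)
  have h2 := d.le_opNorm w
  have h3 := mul_le_mul_of_nonneg_right (hM d hd) (norm_nonneg w)
  linarith

lemma le_qD (hM : ∀ d ∈ D, ‖d‖ ≤ M) {d : StrongDual ℝ E} (hd : d ∈ D) (w : E) :
    d w ≤ qD D w := le_csSup (qD_bdd hM w) ⟨d, hd, rfl⟩

lemma qD_le (hDne : D.Nonempty) {w : E} {b : ℝ} (h : ∀ d ∈ D, d w ≤ b) :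
    qD D w ≤ b := csSup_le (hDne.image _) (by rintro _ ⟨d, hd, rfl⟩; exact h d hd)

lemma qD_zero (hDne : D.Nonempty) : qD D (0 : E) = 0 := by
  apply le_antisymm
  · exact qD_le hDne (fun d _ => by rw [map_zero])
  · obtain ⟨d, hd⟩ := hDne
    have : d (0 : E) = 0 := map_zero d
    calc (0:ℝ) = d 0 := this.symm
      _ ≤ sSup ((fun d => d (0:E)) '' D) := le_csSup ⟨0, by
          rintro _ ⟨d', _, rfl⟩
          simp only [map_zero, le_refl]⟩ ⟨d, hd, rfl⟩

lemma qD_add (hDne : D.Nonempty) (hM : ∀ d ∈ D, ‖d‖ ≤ M) (a b : E) :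
    qD D (a + b) ≤ qD D a + qD D b := by
  apply qD_le hDne
  intro d hd
  have h1 := le_qD hM hd a
  have h2 := le_qD hM hd b
  rw [map_add]
  linarith

lemma qD_combo (hDne : D.Nonempty) (hM : ∀ d ∈ D, ‖d‖ ≤ M) {a b : ℝ}
    (ha : 0 ≤ a) (hb : 0 ≤ b) (x y : E) :
    qD D (a • x + b • y) ≤ a * qD D x + b * qD D y := by
  apply qD_le hDne
  intro d hd
  have h1 := mul_le_mul_of_nonneg_left (le_qD hM hd x) ha
  have h2 := mul_le_mul_of_nonneg_left (le_qD hM hd y) hb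
  have : d (a • x + b • y) = a * d x + b * d y := by
    rw [map_add, map_smul, map_smul]; rfl
  linarith [this]

lemma qD_lip (hDne : D.Nonempty) (hM : ∀ d ∈ D, ‖d‖ ≤ M) (x y : E) :
    qD D x ≤ qD D y + M * ‖x - y‖ := by
  apply qD_le hDne
  intro d hd
  have h1 := le_qD hM hd y
  have h2 : d (x - y) ≤ M * ‖x - y‖ := by
    have h3 : d (x - y) ≤ ‖d (x - y)‖ :=
      le_trans (le_abs_self _) (le_of_eq (Real.norm_eq_abs _).symm)
    have h4 := d.le_opNorm (x - y)
    have h5 := mul_le_mul_of_nonneg_right (hM d hd) (norm_nonneg (x - y))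
    linarith
  have h6 : d x = d y + d (x - y) := by rw [map_sub]; ring
  linarith

lemma qD_cont (hDne : D.Nonempty) (hM : ∀ d ∈ D, ‖d‖ ≤ M) :
    Continuous (qD D) := by
  have hM0 : 0 ≤ M := by
    obtain ⟨d, hd⟩ := hDne
    exact le_trans (norm_nonneg d) (hM d hd)
  have : LipschitzWith M.toNNReal (qD D) := by
    apply LipschitzWith.of_dist_le_mul
    intro x y
    rw [Real.dist_eq, abs_sub_le_iff, dist_eq_norm]
    have hc : (M.toNNReal : ℝ) = M := Real.coe_toNNReal _ hM0
    constructor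
    · have := qD_lip hDne hM x y
      rw [hc]; linarith
    · have := qD_lip hDne hM y x
      rw [hc, ← norm_neg]
      rw [neg_sub]
      linarith
  exact this.continuous


lemma Tconv {D : Set (StrongDual ℝ E)} (hDconv : Convex ℝ D) (κ : ℝ) :
    Convex ℝ {v : StrongDual ℝ E | ∃ l ∈ Icc (0:ℝ) κ, ∃ d ∈ D, v = l • d} := by
  rintro v1 ⟨l1, hl1, d1, hd1, rfl⟩ v2 ⟨l2, hl2, d2, hd2, rfl⟩ a b ha hb hab
  set l := a * l1 + b * l2 with hl
  have hl0 : 0 ≤ l := by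
    have h1 := mul_nonneg ha hl1.1
    have h2 := mul_nonneg hb hl2.1
    linarith
  have hlκ : l ≤ κ := by nlinarith [hl1.2, hl2.2]
  rcases eq_or_lt_of_le hl0 with h0 | hpos
  · -- l = 0 : the combination is 0
    have h1 : a * l1 = 0 := by nlinarith [hl1.1, hl2.1]
    have h2 : b * l2 = 0 := by nlinarith [hl1.1, hl2.1]
    refine ⟨0, ⟨le_refl 0, hl1.1.trans hl1.2⟩, d1, hd1, ?_⟩
    simp [smul_smul, h1, h2]
  · refine ⟨l, ⟨hl0, hlκ⟩, (a * l1 / l) • d1 + (b * l2 / l) • d2,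
      hDconv hd1 hd2 (div_nonneg (mul_nonneg ha hl1.1) hl0)
        (div_nonneg (mul_nonneg hb hl2.1) hl0) (by field_simp; exact hl.symm), ?_⟩
    rw [smul_add, smul_smul, smul_smul, smul_smul, smul_smul]
    congr 1 <;> congr 1 <;> field_simp
lemma decompose {D : Set (StrongDual ℝ E)}
    (hDcl : IsClosed (StrongDual.toWeakDual '' D)) (hDconv : Convex ℝ D)
    (hDne : D.Nonempty) (hDb : Bornology.IsBounded D)
    (u : StrongDual ℝ E) (κ ε' : ℝ) (hκ : 0 < κ) (hε' : 0 < ε')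
    (hu : ∀ w : E, u w ≤ κ * max (qD D w) (ε' * ‖w‖)) :
    ∃ l ∈ Icc (0:ℝ) κ, ∃ d ∈ D, ‖u - l • d‖ ≤ κ * ε' := by
  classical
  set DW : Set (WeakDual ℝ E) := StrongDual.toWeakDual '' D with hDW
  have hDWcomp : IsCompact DW := by
    apply WeakDual.isCompact_of_bounded_of_closed
    · rwa [hDW, ← WeakDual.isBounded_toWeakDual_preimage_iff_isBounded, Set.preimage_image_eq _ (LinearEquiv.injective _)]
    · exact hDcl
  have hX : IsCompact ((Icc (0:ℝ) κ) ×ˢ DW) := isCompact_Icc.prod hDWcomp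
  set Z : E → Set (ℝ × WeakDual ℝ E) :=
    fun w => {p | u w - p.1 * p.2 w ≤ κ * ε' * ‖w‖} with hZ
  have hZcl : ∀ w, IsClosed (Z w) := by
    intro w
    have hcont : Continuous fun p : ℝ × WeakDual ℝ E => u w - p.1 * p.2 w :=
      continuous_const.sub (continuous_fst.mul
        ((WeakBilin.eval_continuous (topDualPairing ℝ E) w).comp continuous_snd))
    exact isClosed_le hcont continuous_const
  have hfin : ∀ s : Finset E, ((Icc (0:ℝ) κ ×ˢ DW) ∩ ⋂ w ∈ s, Z w).Nonempty := by
    intro s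
    -- work in the finite-dimensional space V
    set V := (↥s → ℝ) with hV
    set Φc : ℝ × WeakDual ℝ E → V := fun p i => p.1 * p.2 (i : E) with hΦc
    set Ψ : StrongDual ℝ E →ₗ[ℝ] V :=
      { toFun := fun v i => v (i : E)
        map_add' := fun a b => funext fun i => ContinuousLinearMap.add_apply a b (i : E)
        map_smul' := fun r a => funext fun i => rfl } with hΨ
    set T : Set (StrongDual ℝ E) :=
      {v | ∃ l ∈ Icc (0:ℝ) κ, ∃ d ∈ D, v = l • d} with hT
    set A : Set V := Φc '' (Icc (0:ℝ) κ ×ˢ DW) with hA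
    have hAeq : A = Ψ '' T := by
      ext g
      constructor
      · rintro ⟨⟨l, vd⟩, ⟨hl, d, hd, rfl⟩, rfl⟩
        exact ⟨l • d, ⟨l, hl, d, hd, rfl⟩, by funext i; simp [hΨ, hΦc]; rfl⟩
      · rintro ⟨v, ⟨l, hl, d, hd, rfl⟩, rfl⟩
        exact ⟨(l, StrongDual.toWeakDual d), ⟨hl, d, hd, rfl⟩,
          by funext i; simp [hΨ, hΦc]; rfl⟩
    have hAcomp : IsCompact A := by
      apply hX.image
      exact continuous_pi fun i => continuous_fst.mul
        ((WeakBilin.eval_continuous (topDualPairing ℝ E) (i : E)).comp continuous_snd)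
    have hAconv : Convex ℝ A := by
      rw [hAeq]; exact (Tconv hDconv κ).linear_image Ψ
    set Q : Set V := {g | ∀ i : ↥s, u (i : E) - κ * ε' * ‖(i : E)‖ ≤ g i} with hQ
    have hQconv : Convex ℝ Q := by
      intro g hg h hh a b ha hb hab i
      have h1 := hg i; have h2 := hh i
      have : (a • g + b • h) i = a * g i + b * h i := rfl
      rw [this]
      have h3 : a * (u (i:E) - κ * ε' * ‖(i:E)‖) + b * (u (i:E) - κ * ε' * ‖(i:E)‖)
          = u (i:E) - κ * ε' * ‖(i:E)‖ := by rw [← add_mul, hab, one_mul]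
      linarith [mul_le_mul_of_nonneg_left h1 ha, mul_le_mul_of_nonneg_left h2 hb]
    have hQcl : IsClosed Q := by
      have : Q = ⋂ i : ↥s, {g : V | u (i : E) - κ * ε' * ‖(i : E)‖ ≤ g i} := by
        ext g; simp [hQ, Set.mem_iInter]
      rw [this]
      exact isClosed_iInter fun i => isClosed_le continuous_const (continuous_apply i)
    by_cases hAQ : (A ∩ Q).Nonempty
    · obtain ⟨g, ⟨⟨l, vd⟩, hpX, rfl⟩, hgQ⟩ := hAQ
      obtain ⟨d, hd, hdvd⟩ := hpX.2
      refine ⟨(l, vd), hpX, ?_⟩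
      rw [Set.mem_iInter₂]
      intro w hw
      have h2 : u w - κ * ε' * ‖w‖ ≤ l * vd w := hgQ ⟨w, hw⟩
      simp only [hZ, Set.mem_setOf_eq]
      linarith
    · -- separation
      have hdisj : Disjoint A Q := by
        rw [Set.disjoint_iff_inter_eq_empty]
        exact Set.not_nonempty_iff_eq_empty.mp hAQ
      obtain ⟨f, r1, r2, hfA, hr12, hfQ⟩ :=
        geometric_hahn_banach_compact_closed hAconv hAcomp hQconv hQcl hdisj
      exfalso
      set c : ↥s → ℝ := fun i => f (fun j => if i = j then (1:ℝ) else 0) with hc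
      have hfg : ∀ g : V, f g = ∑ i : ↥s, g i * c i := by
        intro g
        conv_lhs => rw [pi_eq_sum_univ g]
        rw [map_sum]
        apply Finset.sum_congr rfl
        intro i _
        rw [← smul_eq_mul, ← map_smul]
      set q₀ : V := fun i => u (i : E) - κ * ε' * ‖(i : E)‖ with hq₀
      have hq₀Q : q₀ ∈ Q := fun i => le_refl _
      have hcnn : ∀ i, 0 ≤ c i := by
        intro i
        by_contra hci
        push_neg at hci
        obtain ⟨n, hn⟩ : ∃ n : ℝ, n = (f q₀ - r2) / (-c i) + 1 := ⟨_, rfl⟩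
        have hn0 : 0 ≤ n := by
          have h1 : r2 < f q₀ := hfQ _ hq₀Q
          have h2 : 0 < -c i := by linarith
          have := div_nonneg (by linarith : (0:ℝ) ≤ f q₀ - r2) h2.le
          linarith
        have hmem : q₀ + n • (fun j => if i = j then (1:ℝ) else 0) ∈ Q := by
          intro i'
          have : (q₀ + n • (fun j => if i = j then (1:ℝ) else 0)) i'
              = q₀ i' + n * (if i = i' then (1:ℝ) else 0) := rfl
          rw [this]
          have : 0 ≤ n * (if i = i' then (1:ℝ) else 0) := by positivity
          have hq : q₀ i' = u (i':E) - κ * ε' * ‖(i':E)‖ := rfl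
          linarith
        have hval := hfQ _ hmem
        rw [map_add, map_smul] at hval
        have : f (fun j => if i = j then (1:ℝ) else 0) = c i := rfl
        rw [smul_eq_mul, this] at hval
        have hEq : f q₀ + n * c i = r2 + c i := by
          have hc0 : c i ≠ 0 := ne_of_lt hci
          have hstep : (f q₀ - r2) / (-c i) * c i = -(f q₀ - r2) := by
            rw [div_neg, neg_mul, div_mul_cancel₀ _ hc0]
          rw [hn, add_mul, one_mul, hstep]
          ring
        rw [hEq] at hval
        linarith [hfQ _ hq₀Q]
      set w : E := ∑ i : ↥s, c i • (i : E) with hw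
      have huw : ∀ v : StrongDual ℝ E, v w = ∑ i : ↥s, c i * v (i : E) := by
        intro v
        rw [hw, map_sum]
        apply Finset.sum_congr rfl
        intro i _
        rw [map_smul]; rfl
      have hfq₀ : f q₀ = u w - κ * ε' * (∑ i : ↥s, c i * ‖(i : E)‖) := by
        rw [hfg q₀, huw u, hq₀, Finset.mul_sum, ← Finset.sum_sub_distrib]
        apply Finset.sum_congr rfl
        intro i _
        ring
      set σ' : ℝ := ∑ i : ↥s, c i * ‖(i : E)‖ with hσ'
      have hσ'nn : 0 ≤ σ' := Finset.sum_nonneg fun i _ => mul_nonneg (hcnn i) (norm_nonneg _)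
      have hwσ : ‖w‖ ≤ σ' := by
        rw [hw]
        refine (norm_sum_le _ _).trans ?_
        apply Finset.sum_le_sum
        intro i _
        rw [norm_smul, Real.norm_eq_abs, abs_of_nonneg (hcnn i)]
      have hAval : ∀ l ∈ Icc (0:ℝ) κ, ∀ d ∈ D, l * d w < r1 := by
        intro l hl d hd
        have hmemA : Φc (l, StrongDual.toWeakDual d) ∈ A :=
          ⟨(l, StrongDual.toWeakDual d), ⟨hl, d, hd, rfl⟩, rfl⟩
        have := hfA _ hmemA
        rw [hfg] at this
        have hEq : ∑ i : ↥s, (Φc (l, StrongDual.toWeakDual d)) i * c i = l * d w := by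
          rw [huw d, Finset.mul_sum]
          apply Finset.sum_congr rfl
          intro i _
          have : (Φc (l, StrongDual.toWeakDual d)) i = l * d (i : E) := rfl
          rw [this]; ring
        rwa [hEq] at this
      have hub : u w - κ * ε' * σ' > r2 := by
        have := hfQ _ hq₀Q
        rw [hfq₀] at this
        linarith
      have h0r1 : 0 < r1 := by
        obtain ⟨d, hd⟩ := hDne
        have := hAval 0 ⟨le_refl 0, hκ.le⟩ d hd
        simpa using this
      have hκq : κ * qD D w ≤ r1 := by
        have hq : qD D w ≤ r1 / κ := by
          apply csSup_le ((hDne.image _))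
          rintro x ⟨d, hd, rfl⟩
          have := hAval κ ⟨hκ.le, le_refl κ⟩ d hd
          rw [le_div_iff₀ hκ]
          linarith [this]
        calc κ * qD D w ≤ κ * (r1 / κ) := by
              exact mul_le_mul_of_nonneg_left hq hκ.le
          _ = r1 := by field_simp
      have huw2 := hu w
      rcases le_or_gt (ε' * ‖w‖) (qD D w) with hcase | hcase
      · rw [max_eq_left hcase] at huw2
        nlinarith [mul_nonneg (mul_nonneg hκ.le hε'.le) hσ'nn]
      · rw [max_eq_right hcase.le] at huw2
        have : u w ≤ κ * ε' * σ' := by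
          calc u w ≤ κ * (ε' * ‖w‖) := huw2
            _ ≤ κ * (ε' * σ') := by
                exact mul_le_mul_of_nonneg_left
                  (mul_le_mul_of_nonneg_left hwσ hε'.le) hκ.le
            _ = κ * ε' * σ' := by ring
        linarith
  obtain ⟨⟨l, vd⟩, hpX, hpZ⟩ := hX.inter_iInter_nonempty Z hZcl hfin
  obtain ⟨d, hd, rfl⟩ := hpX.2
  refine ⟨l, hpX.1, d, hd, ?_⟩
  have hptw : ∀ w : E, u w - l * d w ≤ κ * ε' * ‖w‖ := by
    intro w
    have := Set.mem_iInter.mp hpZ w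
    simpa [hZ] using this
  apply ContinuousLinearMap.opNorm_le_bound _ (by positivity)
  intro w
  have h1 := hptw w
  have h2 := hptw (-w)
  rw [map_neg, map_neg, norm_neg] at h2
  have hval : (u - l • d) w = u w - l * d w := by
    simp [ContinuousLinearMap.sub_apply, ContinuousLinearMap.smul_apply]
  rw [hval, Real.norm_eq_abs, abs_le]
  constructor <;> linarith


end OSBPaux
end OSBPaux

/-- For a nonempty subset `D` of the dual, `L_D` is the set of `x ∈ E` with
`sup_{d* ∈ D} ⟨x, d*⟩ < 0`. -/
def LD {E : Type*} [NormedAddCommGroup E] [NormedSpace ℝ E]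
    (D : Set (StrongDual ℝ E)) : Set E :=
  {x | ∃ r < (0 : ℝ), ∀ d ∈ D, d x ≤ r}

/-- `Λ_D = {0} ∪ {λ d* : λ > 0, d* ∈ D}`, the cone generated by `D`. -/
def LambdaD {E : Type*} [NormedAddCommGroup E] [NormedSpace ℝ E]
    (D : Set (StrongDual ℝ E)) : Set (StrongDual ℝ E) :=
  {0} ∪ {z | ∃ l : ℝ, 0 < l ∧ ∃ d ∈ D, z = l • d}

set_option maxHeartbeats 2000000 in
/-- One-side Bishop–Phelps theorem: if `C`, `D` are weak*-closed convex subsets of `E*`,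
`D` nonempty and bounded, and some `y ∈ L_D` has `sup(y, C) < +∞`, then the set
`Σ_C^D` of points of `C` where some `x ∈ L_D` attains its supremum over `C` satisfies
`C ⊆ norm-closure(Σ_C^D + Λ_D)`. -/
theorem one_side_bishop_phelps
    {E : Type*} [NormedAddCommGroup E] [NormedSpace ℝ E] [CompleteSpace E]
    (C D : Set (StrongDual ℝ E))
    (hCcl : IsClosed (StrongDual.toWeakDual '' C)) (hCconv : Convex ℝ C)
    (hDcl : IsClosed (StrongDual.toWeakDual '' D)) (hDconv : Convex ℝ D)
    (hDne : D.Nonempty) (hDb : Bornology.IsBounded D)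
    (hy : ∃ y ∈ LD D, ∃ r : ℝ, ∀ c ∈ C, c y ≤ r) :
    C ⊆ closure ({c ∈ C | ∃ x ∈ LD D, ∀ z ∈ C, z x ≤ c x} + LambdaD D) := by
  classical
  intro c0 hc0
  rw [Metric.mem_closure_iff]
  intro ε hε
  obtain ⟨y, ⟨ry, hry, hdy⟩, rC, hrC⟩ := hy
  obtain ⟨M, hM⟩ := isBounded_iff_forall_norm_le.mp hDb
  have hCne : C.Nonempty := ⟨c0, hc0⟩
  -- the (partial) support-type function f of C, relative to c0
  set S : E → Set ℝ := fun z => (fun c : StrongDual ℝ E => c z - c0 z) '' C with hS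
  set Fn : E → Prop := fun z => BddAbove (S z) with hFn
  set f : E → ℝ := fun z => sSup (S z) with hf
  have hSne : ∀ z, (S z).Nonempty := fun z => ⟨c0 z - c0 z, c0, hc0, rfl⟩
  have hf_nonneg : ∀ z, Fn z → 0 ≤ f z := by
    intro z hz
    have : (0:ℝ) ∈ S z := ⟨c0, hc0, sub_self _⟩
    exact le_csSup hz this
  have hf_ub : ∀ z, Fn z → ∀ c ∈ C, c z - c0 z ≤ f z := by
    intro z hz c hc
    exact le_csSup hz ⟨c, hc, rfl⟩
  have hf_le : ∀ z (b : ℝ), (∀ c ∈ C, c z - c0 z ≤ b) → f z ≤ b := by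
    intro z b hb
    apply csSup_le (hSne z)
    rintro _ ⟨c, hc, rfl⟩
    exact hb c hc
  have hFinY : Fn y := ⟨rC - c0 y, by
    rintro _ ⟨c, hc, rfl⟩
    show c y - c0 y ≤ rC - c0 y
    have := hrC c hc
    linarith⟩
  have hFin0 : Fn 0 := ⟨0, by rintro _ ⟨c, hc, rfl⟩; simp⟩
  have hf0 : f 0 = 0 := by
    apply le_antisymm
    · exact hf_le 0 0 (fun c hc => by simp)
    · exact hf_nonneg 0 hFin0
  have hδ : (0:ℝ) < -ry := by linarith
  obtain ⟨α, hα⟩ : ∃ a : ℝ, a = f y := ⟨_, rfl⟩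
  have hα0 : 0 ≤ α := hα ▸ hf_nonneg y hFinY
  obtain ⟨κ, hκdef⟩ : ∃ k : ℝ, k = α / (-ry) + 1 := ⟨_, rfl⟩
  have hκpos : (0:ℝ) < κ := by
    have : 0 ≤ α / (-ry) := div_nonneg hα0 hδ.le
    rw [hκdef]; linarith
  obtain ⟨ε', hε'def⟩ : ∃ e : ℝ, e = ε / (2 * κ) := ⟨_, rfl⟩
  have hε' : (0:ℝ) < ε' := by
    rw [hε'def]
    apply div_pos hε
    linarith
  set ρ : E → ℝ := fun w => max (OSBPaux.qD D w) (ε' * ‖w‖) with hρ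
  have hρ0 : ρ 0 = 0 := by
    rw [hρ]
    simp [OSBPaux.qD_zero hDne]
  have hρ_nonneg : ∀ w, 0 ≤ ρ w := by
    intro w
    have : (0:ℝ) ≤ ε' * ‖w‖ := mul_nonneg hε'.le (norm_nonneg _)
    exact le_trans this (le_max_right _ _)
  have hρ_norm : ∀ w, ε' * ‖w‖ ≤ ρ w := fun w => le_max_right _ _
  have hρ_q : ∀ w, OSBPaux.qD D w ≤ ρ w := fun w => le_max_left _ _
  have hρ_add : ∀ a b, ρ (a + b) ≤ ρ a + ρ b := by
    intro a b
    rw [hρ]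
    apply max_le
    · calc OSBPaux.qD D (a + b) ≤ OSBPaux.qD D a + OSBPaux.qD D b :=
            OSBPaux.qD_add hDne hM a b
        _ ≤ ρ a + ρ b := add_le_add (hρ_q a) (hρ_q b)
    · calc ε' * ‖a + b‖ ≤ ε' * (‖a‖ + ‖b‖) :=
            mul_le_mul_of_nonneg_left (norm_add_le a b) hε'.le
        _ = ε' * ‖a‖ + ε' * ‖b‖ := by ring
        _ ≤ ρ a + ρ b := add_le_add (hρ_norm a) (hρ_norm b)
  have hρ_combo : ∀ (a b : ℝ), 0 ≤ a → 0 ≤ b → ∀ x y' : E,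
      ρ (a • x + b • y') ≤ a * ρ x + b * ρ y' := by
    intro a b ha hb x y'
    rw [hρ]
    apply max_le
    · calc OSBPaux.qD D (a • x + b • y') ≤ a * OSBPaux.qD D x + b * OSBPaux.qD D y' :=
            OSBPaux.qD_combo hDne hM ha hb x y'
        _ ≤ a * ρ x + b * ρ y' := add_le_add
            (mul_le_mul_of_nonneg_left (hρ_q x) ha) (mul_le_mul_of_nonneg_left (hρ_q y') hb)
    · calc ε' * ‖a • x + b • y'‖ ≤ ε' * (‖a • x‖ + ‖b • y'‖) :=
            mul_le_mul_of_nonneg_left (norm_add_le _ _) hε'.le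
        _ = a * (ε' * ‖x‖) + b * (ε' * ‖y'‖) := by
            rw [norm_smul, norm_smul, Real.norm_eq_abs, Real.norm_eq_abs,
              abs_of_nonneg ha, abs_of_nonneg hb]; ring
        _ ≤ a * ρ x + b * ρ y' := add_le_add
            (mul_le_mul_of_nonneg_left (hρ_norm x) ha) (mul_le_mul_of_nonneg_left (hρ_norm y') hb)
  have hρ_cont : Continuous ρ := by
    rw [hρ]
    exact (OSBPaux.qD_cont hDne hM).max (continuous_const.mul continuous_norm)
  -- Ekeland-type iteration
  set G : E → Set E := fun x => {z | Fn z ∧ f z + κ * ρ (z - x) ≤ f x} with hG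
  set μ : E → ℝ := fun x => sInf (f '' G x) with hμ
  have hxG : ∀ x, Fn x → x ∈ G x := by
    intro x hx
    refine ⟨hx, ?_⟩
    rw [sub_self, hρ0, mul_zero, add_zero]
  have hGbdd : ∀ x, BddBelow (f '' G x) := by
    intro x
    refine ⟨0, ?_⟩
    rintro _ ⟨z, hz, rfl⟩
    exact hf_nonneg z hz.1
  have hμle : ∀ x, Fn x → μ x ≤ f x := by
    intro x hx
    exact csInf_le (hGbdd x) ⟨x, hxG x hx, rfl⟩
  have hμmem : ∀ x z, z ∈ G x → μ x ≤ f z := by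
    intro x z hz
    exact csInf_le (hGbdd x) ⟨z, hz, rfl⟩
  have hchoice : ∀ x, Fn x → ∃ z, z ∈ G x ∧ f z ≤ (f x + μ x) / 2 := by
    intro x hx
    rcases lt_or_ge (μ x) ((f x + μ x) / 2) with h | h
    · have hne : (f '' G x).Nonempty := ⟨f x, Set.mem_image_of_mem f (hxG x hx)⟩
      have h' : sInf (f '' G x) < (f x + μ x) / 2 := h
      obtain ⟨v, hv, hvlt⟩ := exists_lt_of_csInf_lt hne h'
      obtain ⟨z, hz, rfl⟩ := hv
      exact ⟨z, hz, hvlt.le⟩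
    · -- μ x = f x
      refine ⟨x, hxG x hx, ?_⟩
      have := hμle x hx
      linarith
  set next : E → E := fun x => if hx : Fn x then (hchoice x hx).choose else x with hnext
  have hstep : ∀ x, Fn x → next x ∈ G x ∧ f (next x) ≤ (f x + μ x) / 2 := by
    intro x hx
    have h1 : next x = (hchoice x hx).choose := dif_pos hx
    rw [h1]
    exact (hchoice x hx).choose_spec
  set seq : ℕ → E := fun n => Nat.rec y (fun _ p => next p) n with hseq
  have hseq0 : seq 0 = y := rfl
  have hseqS : ∀ n, seq (n + 1) = next (seq n) := fun n => rfl
  have hFS : ∀ n, Fn (seq n) := by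
    intro n
    induction n with
    | zero => exact hFinY
    | succ n ih =>
      rw [hseqS]
      exact ((hstep (seq n) ih).1).1
  have htrans : ∀ x x' z, Fn x → x' ∈ G x → z ∈ G x' → z ∈ G x := by
    intro x x' z hx hx' hz
    refine ⟨hz.1, ?_⟩
    have h1 : z - x = (z - x') + (x' - x) := by abel
    have h2 : ρ (z - x) ≤ ρ (z - x') + ρ (x' - x) := by
      rw [h1]; exact hρ_add _ _
    have h3 := hz.2
    have h4 := hx'.2
    nlinarith [mul_le_mul_of_nonneg_left h2 hκpos.le]
  have hchain : ∀ n m, n ≤ m → seq m ∈ G (seq n) := by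
    intro n m hnm
    induction m, hnm using Nat.le_induction with
    | base => exact hxG (seq n) (hFS n)
    | succ m hnm ih =>
      have := (hstep (seq m) (hFS m)).1
      rw [← hseqS] at this
      exact htrans (seq n) (seq m) (seq (m+1)) (hFS n) ih this
  have hf_anti : ∀ n m, n ≤ m → f (seq m) ≤ f (seq n) := by
    intro n m hnm
    have h1 := (hchain n m hnm).2
    nlinarith [hρ_nonneg (seq m - seq n), hκpos]
  have hbdd_range : BddBelow (Set.range fun n => f (seq n)) := by
    refine ⟨0, ?_⟩
    rintro _ ⟨n, rfl⟩
    exact hf_nonneg _ (hFS n)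
  obtain ⟨L, hLdef⟩ : ∃ l : ℝ, l = ⨅ n, f (seq n) := ⟨_, rfl⟩
  have hL : Filter.Tendsto (fun n => f (seq n)) Filter.atTop (nhds L) := by
    rw [hLdef]
    exact tendsto_atTop_ciInf (fun n m hnm => hf_anti n m hnm) hbdd_range
  have hLle : ∀ n, L ≤ f (seq n) := fun n => hLdef ▸ ciInf_le hbdd_range n
  have hCauchy : CauchySeq seq := by
    apply cauchySeq_of_le_tendsto_0 (b := fun n => (f (seq n) - L) / (κ * ε'))
    · intro n m N hn hm
      have key : ∀ i j, N ≤ i → i ≤ j → dist (seq i) (seq j) ≤ (f (seq N) - L) / (κ * ε') := by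
        intro i j hi hij
        have h1 := (hchain i j hij).2
        have h2 : ε' * ‖seq j - seq i‖ ≤ ρ (seq j - seq i) := hρ_norm _
        have h3 : κ * (ε' * ‖seq j - seq i‖) ≤ κ * ρ (seq j - seq i) :=
          mul_le_mul_of_nonneg_left h2 hκpos.le
        have h4 : κ * ε' * ‖seq j - seq i‖ ≤ f (seq i) - f (seq j) := by nlinarith
        have h5 : f (seq i) ≤ f (seq N) := hf_anti N i hi
        have h6 : L ≤ f (seq j) := hLle j
        rw [dist_eq_norm, ← norm_neg, neg_sub]
        rw [le_div_iff₀ (mul_pos hκpos hε')]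
        nlinarith
      rcases le_total n m with h | h
      · exact key n m hn h
      · rw [dist_comm]; exact key m n hm h
    · have h1 : Filter.Tendsto (fun n => f (seq n) - L) Filter.atTop (nhds 0) := by
        have := hL.sub (tendsto_const_nhds (x := L))
        simpa using this
      have := h1.div_const (κ * ε')
      simpa using this
  obtain ⟨xbar, hxbar⟩ := cauchySeq_tendsto_of_complete hCauchy
  have hkey : ∀ n, ∀ c ∈ C, c xbar - c0 xbar + κ * ρ (xbar - seq n) ≤ f (seq n) := by
    intro n c hc
    have htend : Filter.Tendsto
        (fun m => c (seq m) - c0 (seq m) + κ * ρ (seq m - seq n)) Filter.atTop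
        (nhds (c xbar - c0 xbar + κ * ρ (xbar - seq n))) := by
      have h1 : Filter.Tendsto (fun m => c (seq m)) Filter.atTop (nhds (c xbar)) :=
        (c.continuous.tendsto xbar).comp hxbar
      have h2 : Filter.Tendsto (fun m => c0 (seq m)) Filter.atTop (nhds (c0 xbar)) :=
        (c0.continuous.tendsto xbar).comp hxbar
      have h3 : Filter.Tendsto (fun m => ρ (seq m - seq n)) Filter.atTop
          (nhds (ρ (xbar - seq n))) := by
        have hc3 : Continuous fun z : E => ρ (z - seq n) :=
          hρ_cont.comp (continuous_id.sub continuous_const)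
        exact (hc3.tendsto xbar).comp hxbar
      exact (h1.sub h2).add (h3.const_mul κ)
    apply le_of_tendsto htend
    filter_upwards [Filter.eventually_ge_atTop n] with m hm
    have h1 := (hchain n m hm).2
    have h2 := hf_ub (seq m) (hFS m) c hc
    linarith
  have hFinxbar : Fn xbar := by
    refine ⟨f (seq 0), ?_⟩
    rintro _ ⟨c, hc, rfl⟩
    show c xbar - c0 xbar ≤ f (seq 0)
    have := hkey 0 c hc
    nlinarith [hρ_nonneg (xbar - seq 0), hκpos]
  have hfxbar_le : ∀ n, f xbar + κ * ρ (xbar - seq n) ≤ f (seq n) := by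
    intro n
    have : f xbar ≤ f (seq n) - κ * ρ (xbar - seq n) := by
      apply hf_le
      intro c hc
      have := hkey n c hc
      linarith
    linarith
  have hρxy : ρ (xbar - y) ≤ α / κ := by
    have h1 := hfxbar_le 0
    rw [hseq0] at h1
    have h2 := hf_nonneg xbar hFinxbar
    rw [le_div_iff₀ hκpos]
    nlinarith
  have hfxbarL : f xbar ≤ L := by
    rw [hLdef]
    apply le_ciInf
    intro n
    have := hfxbar_le n
    nlinarith [hρ_nonneg (xbar - seq n), hκpos]
  have hmin : ∀ z, Fn z → f xbar ≤ f z + κ * ρ (z - xbar) := by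
    intro z hz
    by_contra hcon
    push_neg at hcon
    have hzG : ∀ n, z ∈ G (seq n) := by
      intro n
      refine ⟨hz, ?_⟩
      have h1 : ρ (z - seq n) ≤ ρ (z - xbar) + ρ (xbar - seq n) := by
        have : z - seq n = (z - xbar) + (xbar - seq n) := by abel
        rw [this]; exact hρ_add _ _
      have h2 := hfxbar_le n
      nlinarith [mul_le_mul_of_nonneg_left h1 hκpos.le]
    have hzμ : ∀ n, μ (seq n) ≤ f z := fun n => hμmem (seq n) z (hzG n)
    have hz2 : ∀ n, 2 * f (seq (n+1)) - f (seq n) ≤ f z := by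
      intro n
      have := (hstep (seq n) (hFS n)).2
      rw [← hseqS] at this
      have h2 := hzμ n
      linarith
    have htend2 : Filter.Tendsto (fun n => 2 * f (seq (n+1)) - f (seq n))
        Filter.atTop (nhds L) := by
      have h1 : Filter.Tendsto (fun n => f (seq (n+1))) Filter.atTop (nhds L) :=
        hL.comp (Filter.tendsto_add_atTop_nat 1)
      have h2 := (h1.const_mul 2).sub hL
      have : 2 * L - L = L := by ring
      rwa [this] at h2
    have hLz : L ≤ f z := le_of_tendsto htend2 (Filter.Eventually.of_forall hz2)
    nlinarith [hρ_nonneg (z - xbar), hκpos, hfxbarL]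
  -- Separation in E × ℝ
  set Aset : Set (E × ℝ) := {p | κ * ρ p.1 < p.2} with hAset
  set Bset : Set (E × ℝ) :=
    {p | ∀ c ∈ C, p.2 ≤ c0 p.1 + f xbar + c0 xbar - c (xbar + p.1)} with hBset
  have hAopen : IsOpen Aset :=
    isOpen_lt (continuous_const.mul (hρ_cont.comp continuous_fst)) continuous_snd
  have hAconv : Convex ℝ Aset := by
    intro p hp q hq a b ha hb hab
    have hp' : κ * ρ p.1 < p.2 := hp
    have hq' : κ * ρ q.1 < q.2 := hq
    show κ * ρ (a • p + b • q).1 < (a • p + b • q).2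
    have h1 : (a • p + b • q).1 = a • p.1 + b • q.1 := rfl
    have h2 : (a • p + b • q).2 = a * p.2 + b * q.2 := rfl
    rw [h1, h2]
    have h3 := hρ_combo a b ha hb p.1 q.1
    have h4 := mul_le_mul_of_nonneg_left h3 hκpos.le
    rcases eq_or_lt_of_le ha with ha0 | ha0
    · have hb1 : b = 1 := by linarith
      rw [← ha0, hb1]
      simpa using hq'
    · have h5 := mul_lt_mul_of_pos_left hp' ha0
      have h6 := mul_le_mul_of_nonneg_left hq'.le hb
      nlinarith
  have hBconv : Convex ℝ Bset := by
    intro p hp q hq a b ha hb hab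
    intro c hc
    have hp' := hp c hc
    have hq' := hq c hc
    show (a • p + b • q).2 ≤ c0 (a • p + b • q).1 + f xbar + c0 xbar
        - c (xbar + (a • p + b • q).1)
    have h1 : (a • p + b • q).1 = a • p.1 + b • q.1 := rfl
    have h2 : (a • p + b • q).2 = a * p.2 + b * q.2 := rfl
    rw [h1, h2]
    have e1 : c0 (a • p.1 + b • q.1) = a * c0 p.1 + b * c0 q.1 := by
      rw [map_add, map_smul, map_smul]; rfl
    have hxsplit : xbar + (a • p.1 + b • q.1) = a • (xbar + p.1) + b • (xbar + q.1) := by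
      rw [smul_add, smul_add, add_add_add_comm, ← add_smul, hab, one_smul]
    have e2 : c (xbar + (a • p.1 + b • q.1)) = a * c (xbar + p.1) + b * c (xbar + q.1) := by
      rw [hxsplit, map_add, map_smul, map_smul]; rfl
    have e3 : a * (f xbar + c0 xbar) + b * (f xbar + c0 xbar) = f xbar + c0 xbar := by
      rw [← add_mul, hab, one_mul]
    nlinarith [mul_le_mul_of_nonneg_left hp' ha, mul_le_mul_of_nonneg_left hq' hb]
  have hdisj : Disjoint Aset Bset := by
    rw [Set.disjoint_left]
    rintro ⟨w, t⟩ hA hB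
    have hA' : κ * ρ w < t := hA
    have hB' : ∀ c ∈ C, t ≤ c0 w + f xbar + c0 xbar - c (xbar + w) := hB
    have hFnz : Fn (xbar + w) := by
      refine ⟨f xbar - t, ?_⟩
      rintro _ ⟨c, hc, rfl⟩
      show c (xbar + w) - c0 (xbar + w) ≤ f xbar - t
      have h1 := hB' c hc
      have e : c0 (xbar + w) = c0 xbar + c0 w := map_add _ _ _
      linarith
    have hle : f (xbar + w) ≤ f xbar - t := by
      apply hf_le
      intro c hc
      have h1 := hB' c hc
      have e : c0 (xbar + w) = c0 xbar + c0 w := map_add _ _ _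
      linarith
    have hm := hmin (xbar + w) hFnz
    have e4 : xbar + w - xbar = w := by abel
    rw [e4] at hm
    linarith
  obtain ⟨F, sF, hFA, hFB⟩ := geometric_hahn_banach_open hAconv hAopen hBconv hdisj
  set Gm : StrongDual ℝ E := F.comp (ContinuousLinearMap.inl ℝ E ℝ) with hGm
  obtain ⟨β, hβ⟩ : ∃ b : ℝ, b = F (0, 1) := ⟨_, rfl⟩
  have hdec : ∀ (w : E) (t : ℝ), F (w, t) = Gm w + t * β := by
    intro w t
    have hsplit : (w, t) = (w, (0:ℝ)) + t • ((0:E), (1:ℝ)) := by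
      simp [Prod.ext_iff]
    rw [hsplit, map_add, map_smul, smul_eq_mul, hβ]
    congr 1
  have hGm0 : Gm (0 : E) = 0 := map_zero Gm
  have h00B : ((0:E), (0:ℝ)) ∈ Bset := by
    intro c hc
    show (0:ℝ) ≤ c0 0 + f xbar + c0 xbar - c (xbar + 0)
    rw [map_zero, add_zero]
    have := hf_ub xbar hFinxbar c hc
    linarith
  have hsle : sF ≤ 0 := by
    have h1 := hFB _ h00B
    rw [hdec] at h1
    rw [hGm0] at h1
    linarith
  have hA0t : ∀ t : ℝ, 0 < t → t * β < sF := by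
    intro t ht
    have hmem : ((0:E), t) ∈ Aset := by
      show κ * ρ 0 < t
      rw [hρ0, mul_zero]; exact ht
    have h1 := hFA _ hmem
    rw [hdec, hGm0] at h1
    linarith
  have hβneg : β < 0 := by
    have := hA0t 1 one_pos
    rw [one_mul] at this
    linarith
  have hβpos : 0 < -β := by linarith
  have hβne : β ≠ 0 := ne_of_lt hβneg
  have hs0 : sF = 0 := by
    apply le_antisymm hsle
    by_contra hneg
    push_neg at hneg
    have ht : 0 < sF / β := div_pos_of_neg_of_neg hneg hβneg
    have h1 := hA0t (sF / β) ht
    rw [div_mul_cancel₀ _ hβne] at h1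
    exact lt_irrefl _ h1
  have hGm_le : ∀ w, Gm w ≤ (-β) * (κ * ρ w) := by
    intro w
    by_contra hcon
    push_neg at hcon
    have htgt : κ * ρ w < Gm w / (-β) := by
      rw [lt_div_iff₀ hβpos]
      nlinarith
    have hmem : (w, Gm w / (-β)) ∈ Aset := htgt
    have h1 := hFA _ hmem
    rw [hdec, hs0] at h1
    have hEq : Gm w / (-β) * β = -Gm w := by
      field_simp
    rw [hEq] at h1
    linarith
  obtain ⟨u, hu_def⟩ : ∃ u : StrongDual ℝ E, u = (-β)⁻¹ • Gm := ⟨_, rfl⟩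
  have hu_app : ∀ w, u w = (-β)⁻¹ * Gm w := by
    intro w; rw [hu_def]; rfl
  have hu : ∀ w, u w ≤ κ * ρ w := by
    intro w
    rw [hu_app, inv_mul_le_iff₀ hβpos]
    exact hGm_le w
  have hB_ineq : ∀ w, Fn (xbar + w) →
      c0 w + f xbar + c0 xbar - (f (xbar + w) + c0 (xbar + w)) ≤ u w := by
    intro w hw
    have hmem : (w, c0 w + f xbar + c0 xbar - (f (xbar + w) + c0 (xbar + w))) ∈ Bset := by
      intro c hc
      show c0 w + f xbar + c0 xbar - (f (xbar + w) + c0 (xbar + w))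
          ≤ c0 w + f xbar + c0 xbar - c (xbar + w)
      have := hf_ub (xbar + w) hw c hc
      linarith
    have h1 := hFB _ hmem
    rw [hdec, hs0] at h1
    have h2 : (c0 w + f xbar + c0 xbar - (f (xbar + w) + c0 (xbar + w))) * (-β) ≤ Gm w := by
      nlinarith
    have h3 := mul_le_mul_of_nonneg_left h2 (inv_nonneg.mpr hβpos.le)
    rw [hu_app]
    calc c0 w + f xbar + c0 xbar - (f (xbar + w) + c0 (xbar + w))
        = (-β)⁻¹ * ((c0 w + f xbar + c0 xbar - (f (xbar + w) + c0 (xbar + w))) * (-β)) := by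
          rw [mul_comm ((c0 w + f xbar + c0 xbar - (f (xbar + w) + c0 (xbar + w)))) (-β),
            inv_mul_cancel_left₀ (ne_of_gt hβpos)]
      _ ≤ (-β)⁻¹ * Gm w := h3
  have hbound0 : f xbar + u xbar ≤ 0 := by
    have hFn0' : Fn (xbar + -xbar) := by rw [add_neg_cancel]; exact hFin0
    have h := hB_ineq (-xbar) hFn0'
    rw [add_neg_cancel, map_neg, map_neg, hf0, map_zero] at h
    linarith
  obtain ⟨xstar, hxstar⟩ : ∃ v : StrongDual ℝ E, v = c0 - u := ⟨_, rfl⟩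
  have hxstar_app : ∀ w, xstar w = c0 w - u w := by intro w; rw [hxstar]; rfl
  have hub : ∀ (w : E) (b : ℝ), (∀ c ∈ C, c w ≤ b) → xstar w ≤ b := by
    intro w b hb
    by_contra hcon
    push_neg at hcon
    obtain ⟨κ₀, hκ₀⟩ : ∃ k : ℝ, k = -(f xbar + u xbar) := ⟨_, rfl⟩
    have hκ₀0 : 0 ≤ κ₀ := by rw [hκ₀]; linarith
    have hgap : 0 < xstar w - b := by linarith
    obtain ⟨t, ht⟩ : ∃ t : ℝ, t = κ₀ / (xstar w - b) + 1 := ⟨_, rfl⟩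
    have htpos : 0 < t := by
      rw [ht]
      have := div_nonneg hκ₀0 hgap.le
      linarith
    have hFnt : Fn (t • w) := by
      refine ⟨t * b - t * c0 w, ?_⟩
      rintro _ ⟨c, hc, rfl⟩
      show c (t • w) - c0 (t • w) ≤ t * b - t * c0 w
      have e1 : c (t • w) = t * c w := by rw [map_smul]; rfl
      have e2 : c0 (t • w) = t * c0 w := by rw [map_smul]; rfl
      have := mul_le_mul_of_nonneg_left (hb c hc) htpos.le
      rw [e1, e2]; linarith
    have hft : f (t • w) ≤ t * b - t * c0 w := by
      apply hf_le
      intro c hc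
      have e1 : c (t • w) = t * c w := by rw [map_smul]; rfl
      have e2 : c0 (t • w) = t * c0 w := by rw [map_smul]; rfl
      have := mul_le_mul_of_nonneg_left (hb c hc) htpos.le
      rw [e1, e2]; linarith
    have hFn' : Fn (xbar + (t • w - xbar)) := by rw [add_sub_cancel]; exact hFnt
    have h := hB_ineq (t • w - xbar) hFn'
    rw [add_sub_cancel] at h
    have e1 : c0 (t • w - xbar) = t * c0 w - c0 xbar := by
      rw [map_sub, map_smul]; rfl
    have e2 : u (t • w - xbar) = t * u w - u xbar := by
      rw [map_sub, map_smul]; rfl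
    have e3 : c0 (t • w) = t * c0 w := by rw [map_smul]; rfl
    rw [e1, e2, e3] at h
    have hxt : t * xstar w = t * c0 w - t * u w := by rw [hxstar_app]; ring
    have hcan : κ₀ / (xstar w - b) * (xstar w - b) = κ₀ :=
      div_mul_cancel₀ _ (ne_of_gt hgap)
    have hkt : κ₀ < t * (xstar w - b) := by
      rw [ht, add_mul, one_mul, hcan]; linarith
    have hexp : t * (xstar w - b) = t * xstar w - t * b := by ring
    have hkt' : κ₀ + t * b < t * xstar w := by linarith
    linarith [h, hft, hxt, hκ₀]
  have hxstarC : xstar ∈ C := OSBPaux.mem_of_forall_ub hCcl hCconv hub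
  have hattain : ∀ z ∈ C, z xbar ≤ xstar xbar := by
    intro z hz
    have h1 := hf_ub xbar hFinxbar z hz
    rw [hxstar_app]
    linarith
  have hxbarLD : xbar ∈ LD D := by
    refine ⟨ry + α / κ, ?_, ?_⟩
    · have h1 : α / κ < -ry := by
        rw [div_lt_iff₀ hκpos, hκdef, mul_add, mul_one, mul_div_cancel₀ _ (ne_of_gt hδ)]
        linarith
      linarith
    · intro d hd
      have h1 : d xbar = d y + d (xbar - y) := by rw [map_sub]; ring
      have h2 := OSBPaux.le_qD hM hd (xbar - y)
      have h3 := hρ_q (xbar - y)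
      have h4 := hρxy
      have h5 := hdy d hd
      linarith
  have hu' : ∀ w : E, u w ≤ κ * max (OSBPaux.qD D w) (ε' * ‖w‖) := fun w => hu w
  obtain ⟨l, hl, d, hd, hnorm⟩ :=
    OSBPaux.decompose hDcl hDconv hDne hDb u κ ε' hκpos hε' hu'
  refine ⟨xstar + l • d, ?_, ?_⟩
  · apply Set.add_mem_add
    · exact ⟨hxstarC, xbar, hxbarLD, fun z hz => hattain z hz⟩
    · rcases eq_or_lt_of_le hl.1 with h0 | h0
      · left
        rw [← h0, zero_smul]
        rfl
      · right
        exact ⟨l, h0, d, hd, rfl⟩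
  · have he : c0 - (xstar + l • d) = u - l • d := by
      rw [hxstar]; abel
    rw [dist_eq_norm, he]
    have hhalf : κ * ε' = ε / 2 := by
      rw [hε'def]
      field_simp
    calc ‖u - l • d‖ ≤ κ * ε' := hnorm
      _ = ε / 2 := hhalf
      _ < ε := by linarith
end

section
/- Let E be a real Banach space, D ⊆ E* a nonempty weak*-compact convex set with 0 ∉ D, C ⊆ E* a weak*-closed convex set such that every x ∈ L_D has finite supremum on C, and B ⊆ C. Suppose that for every covering B ⊆ ∪_{n=1}^∞ K_n by an increasing sequence of weak*-compact convex subsets K_n ⊆ C one has C ⊆ norm-closure(∪_{n=1}^∞ K_n + Λ_D). Then for every bounded sequence (x_n) in L_D, sup_{b* ∈ B} (limsup_n ⟨x_n,b*⟩) = sup_{c* ∈ C} (limsup_n ⟨x_n,c*⟩). -/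
open Filter Topology Pointwise

/-- (i) ⇒ (ii) of the equivalence between one-side (I)-generation and Simons' equality:
if for every covering of `B` by an increasing sequence of weak*-compact convex subsets
`Kₙ ⊆ C` one has `C ⊆ norm-closure(⋃ₙ Kₙ + Λ_D)`, then for every bounded sequence `(xₙ)`
in `L_D` the sup over `B` of `limsupₙ ⟨xₙ, ·⟩` equals the corresponding sup over `C`. -/
theorem one_side_I_generation_implies_sup_limsup
    {E : Type*} [NormedAddCommGroup E] [NormedSpace ℝ E] [CompleteSpace E]
    (D : Set (StrongDual ℝ E)) (hDne : D.Nonempty)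
    (hDcpt : IsCompact (StrongDual.toWeakDual '' D)) (hDconv : Convex ℝ D)
    (hD0 : (0 : StrongDual ℝ E) ∉ D)
    (C : Set (StrongDual ℝ E))
    (hCcl : IsClosed (StrongDual.toWeakDual '' C)) (hCconv : Convex ℝ C)
    (hfin : ∀ x ∈ LD D, ∃ r : ℝ, IsLUB ((fun c : StrongDual ℝ E => c x) '' C) r)
    (B : Set (StrongDual ℝ E)) (hBC : B ⊆ C)
    (hgen : ∀ K : ℕ → Set (StrongDual ℝ E), Monotone K →
      (∀ n, IsCompact (StrongDual.toWeakDual '' K n)) →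
      (∀ n, Convex ℝ (K n)) → (∀ n, K n ⊆ C) → B ⊆ ⋃ n, K n →
      C ⊆ closure ((⋃ n, K n) + LambdaD D)) :
    ∀ x : ℕ → E, (∀ n, x n ∈ LD D) → Bornology.IsBounded (Set.range x) →
      (⨆ b ∈ B, ((Filter.limsup (fun n => b (x n)) atTop : ℝ) : EReal)) =
        ⨆ c ∈ C, ((Filter.limsup (fun n => c (x n)) atTop : ℝ) : EReal) := by
  intro x hx hbd
  -- a uniform bound on the sequence
  obtain ⟨M0, hM0⟩ := isBounded_iff_forall_norm_le.mp hbd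
  set M : ℝ := max M0 0 with hMdef
  have hM : ∀ n, ‖x n‖ ≤ M := fun n =>
    (hM0 _ (Set.mem_range_self n)).trans (le_max_left _ _)
  have hMnn : (0 : ℝ) ≤ M := le_max_right _ _
  have habs : ∀ (c : StrongDual ℝ E) (n : ℕ), |c (x n)| ≤ ‖c‖ * M := by
    intro c n
    calc |c (x n)| = ‖c (x n)‖ := (Real.norm_eq_abs _).symm
      _ ≤ ‖c‖ * ‖x n‖ := c.le_opNorm _
      _ ≤ ‖c‖ * M := by
          exact mul_le_mul_of_nonneg_left (hM n) (norm_nonneg c)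
  have hbdle : ∀ c : StrongDual ℝ E,
      IsBoundedUnder (· ≤ ·) atTop (fun n => c (x n)) := fun c =>
    isBoundedUnder_of ⟨‖c‖ * M, fun n => (le_abs_self _).trans (habs c n)⟩
  have hbdge : ∀ c : StrongDual ℝ E,
      IsBoundedUnder (· ≥ ·) atTop (fun n => c (x n)) := fun c =>
    isBoundedUnder_of ⟨-(‖c‖ * M), fun n => neg_le_of_abs_le (habs c n)⟩
  have himg : ∀ S : Set (StrongDual ℝ E),
      StrongDual.toWeakDual '' S = S := fun S => by
    ext w
    exact ⟨fun ⟨y, hy, h⟩ => by rw [← h]; exact hy, fun h => ⟨w, h, rfl⟩⟩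
  refine le_antisymm (biSup_mono fun b hb => hBC hb) ?_
  rcases Set.eq_empty_or_nonempty B with hB | hB
  · -- `B = ∅` forces `C = ∅`
    have hC : C ⊆ (∅ : Set (StrongDual ℝ E)) := by
      have h := hgen (fun _ => ∅) monotone_const
        (fun n => by simp [isCompact_empty]) (fun n => convex_empty)
        (fun n => Set.empty_subset _) (by simp [hB])
      simpa using h
    have hCe : C = ∅ := Set.subset_empty_iff.mp hC
    simp [hB, hCe]
  · set S := ⨆ b ∈ B, ((Filter.limsup (fun n => b (x n)) atTop : ℝ) : EReal) with hSdef
    by_cases hStop : S = ⊤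
    · exact hStop ▸ le_top
    have hSbot : S ≠ ⊥ := by
      obtain ⟨b0, hb0⟩ := hB
      intro h
      have hle : ((Filter.limsup (fun n => b0 (x n)) atTop : ℝ) : EReal) ≤ S :=
        le_biSup (fun b : StrongDual ℝ E =>
          ((Filter.limsup (fun n => b (x n)) atTop : ℝ) : EReal)) hb0
      rw [h, le_bot_iff] at hle
      exact EReal.coe_ne_bot _ hle
    set α := S.toReal with hαdef
    have hαS : (α : EReal) = S := EReal.coe_toReal hStop hSbot
    have hbα : ∀ b ∈ B, Filter.limsup (fun n => b (x n)) atTop ≤ α := by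
      intro b hb
      have hle : ((Filter.limsup (fun n => b (x n)) atTop : ℝ) : EReal) ≤ S :=
        le_biSup (fun b : StrongDual ℝ E =>
          ((Filter.limsup (fun n => b (x n)) atTop : ℝ) : EReal)) hb
      rw [← hαS] at hle
      exact_mod_cast hle
    refine iSup₂_le fun c hc => ?_
    rw [← hαS, EReal.coe_le_coe_iff]
    set L := Filter.limsup (fun n => c (x n)) atTop with hLdef
    have key : ∀ ε : ℝ, 0 < ε → L ≤ α + ε := by
      intro ε hε
      set K : ℕ → Set (StrongDual ℝ E) := fun n =>
        C ∩ Metric.closedBall 0 n ∩ {z | ∀ m, n ≤ m → z (x m) ≤ α + ε / 2} with hKdef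
      have hKmono : Monotone K := by
        intro p q hpq z hz
        refine ⟨⟨hz.1.1, Metric.closedBall_subset_closedBall
          (by exact_mod_cast hpq) hz.1.2⟩, fun m hm => hz.2 m (le_trans hpq hm)⟩
      have hKcl : ∀ n, IsClosed (StrongDual.toWeakDual '' K n) := by
        intro n
        rw [himg]
        have hrw : (K n : Set (WeakDual ℝ E)) =
            (StrongDual.toWeakDual '' C) ∩
            ((WeakDual.toStrongDual ⁻¹' Metric.closedBall 0 n) ∩
              ⋂ m : ℕ, {w : WeakDual ℝ E | n ≤ m → w (x m) ≤ α + ε / 2}) := by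
          ext w
          simp only [hKdef, Set.mem_inter_iff, Set.mem_iInter, Set.mem_setOf_eq,
            Set.mem_preimage, himg]
          exact ⟨fun h => ⟨h.1.1, h.1.2, Set.mem_iInter.mpr fun m => h.2 m⟩,
            fun h => ⟨⟨h.1, h.2.1⟩, fun m => Set.mem_iInter.mp h.2.2 m⟩⟩
        rw [hrw]
        refine hCcl.inter ((WeakDual.isClosed_closedBall 0 n).inter
          (isClosed_iInter fun m => ?_))
        by_cases hnm : n ≤ m
        · simp only [hnm, true_implies]
          exact isClosed_le (WeakDual.eval_continuous (x m)) continuous_const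
        · simp only [hnm, false_implies, Set.setOf_true]
          exact isClosed_univ
      have hKcpt : ∀ n, IsCompact (StrongDual.toWeakDual '' K n) := by
        intro n
        refine (WeakDual.isCompact_closedBall (𝕜 := ℝ) 0 n).of_isClosed_subset (hKcl n) ?_
        rw [himg]
        intro w hw
        exact hw.1.2
      have hKconv : ∀ n, Convex ℝ (K n) := by
        intro n
        refine (hCconv.inter (convex_closedBall 0 n)).inter ?_
        have : {z : StrongDual ℝ E | ∀ m, n ≤ m → z (x m) ≤ α + ε / 2} =
            ⋂ m : ℕ, {z : StrongDual ℝ E | n ≤ m → z (x m) ≤ α + ε / 2} := by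
          ext z; simp
        rw [this]
        refine convex_iInter fun m => ?_
        by_cases hnm : n ≤ m
        · simp only [hnm, true_implies]
          exact convex_halfSpace_le ⟨fun a b => rfl, fun r a => rfl⟩ _
        · simp only [hnm, false_implies, Set.setOf_true]
          exact convex_univ
      have hKsub : ∀ n, K n ⊆ C := fun n z hz => hz.1.1
      have hBcov : B ⊆ ⋃ n, K n := by
        intro b hb
        have h1 : Filter.limsup (fun n => b (x n)) atTop < α + ε / 2 :=
          lt_of_le_of_lt (hbα b hb) (by linarith)
        have h2 := eventually_lt_of_limsup_lt h1 (hbdle b)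
        obtain ⟨N, hN⟩ := eventually_atTop.mp h2
        refine Set.mem_iUnion.mpr ⟨max N ⌈‖b‖⌉₊, ⟨hBC hb, ?_⟩, ?_⟩
        · rw [mem_closedBall_zero_iff]
          calc ‖b‖ ≤ (⌈‖b‖⌉₊ : ℝ) := Nat.le_ceil _
            _ ≤ ((max N ⌈‖b‖⌉₊ : ℕ) : ℝ) := by exact_mod_cast le_max_right N _
        · exact fun m hm => (hN m (le_trans (le_max_left _ _) hm)).le
      have hcc : c ∈ closure ((⋃ n, K n) + LambdaD D) :=
        hgen K hKmono hKcpt hKconv hKsub hBcov hc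
      have key2 : ∀ δ : ℝ, 0 < δ → L ≤ α + ε / 2 + δ * M := by
        intro δ hδ
        obtain ⟨z, hz, hdist⟩ := Metric.mem_closure_iff.mp hcc δ hδ
        obtain ⟨u, hu, w, hw, hzuw⟩ := Set.mem_add.mp hz
        obtain ⟨n, hn⟩ := Set.mem_iUnion.mp hu
        have hwneg : ∀ m, w (x m) ≤ 0 := by
          intro m
          rcases hw with h0 | ⟨l, hl, d, hd, rfl⟩
          · rw [Set.mem_singleton_iff.mp h0]
            simp
          · obtain ⟨r, hr, hdr⟩ := hx m
            have h1 : d (x m) ≤ r := hdr d hd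
            have h2 : (l • d) (x m) = l * d (x m) := rfl
            nlinarith
        refine limsup_le_of_le (hbdge c).isCoboundedUnder_le
          (eventually_atTop.mpr ⟨n, fun m hm => ?_⟩)
        have h2 : (c - z) (x m) ≤ δ * M := by
          calc (c - z) (x m) ≤ |(c - z) (x m)| := le_abs_self _
            _ ≤ ‖c - z‖ * M := habs _ m
            _ ≤ δ * M := by
                refine mul_le_mul_of_nonneg_right ?_ hMnn
                rw [← dist_eq_norm]
                exact hdist.le
        have h3 : u (x m) ≤ α + ε / 2 := hn.2 m hm
        have h4 : c (x m) = u (x m) + w (x m) + (c - z) (x m) := by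
          rw [← hzuw]
          simp [ContinuousLinearMap.sub_apply, ContinuousLinearMap.add_apply]
        rw [h4]
        have := hwneg m
        linarith
      rcases le_or_gt L (α + ε / 2) with h | h
      · linarith
      · have h1 := key2 (ε / (2 * (M + 1))) (by positivity)
        have h2 : ε / (2 * (M + 1)) * M ≤ ε / 2 := by
          rw [div_mul_eq_mul_div, div_le_div_iff₀ (by positivity) (by norm_num)]
          nlinarith
        linarith
    by_contra hcon
    push_neg at hcon
    have := key ((L - α) / 2) (by linarith)
    linarith
end

section
/- Let E be a real Banach space, D ⊆ E* a nonempty weak*-compact convex set with 0 ∉ D, C ⊆ E* a weak*-closed convex set such that every x ∈ L_D has finite supremum on C, and B ⊆ C. Suppose that for every bounded sequence (x_n) in L_D one has sup_{b* ∈ B} (limsup_n ⟨x_n,b*⟩) = sup_{c* ∈ C} (limsup_n ⟨x_n,c*⟩). Then for every bounded sequence (x_n) in L_D, sup_{b* ∈ B} (limsup_n ⟨x_n,b*⟩) ≥ inf{ sup_{c* ∈ C} ⟨c*,x⟩ : x ∈ co_{σp}{x_n : n ≥ 1} }. -/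
open Filter Topology Pointwise

/-- `co_{σp}{xₙ : n ≥ 1}`: the set of all norm-convergent sums `Σₙ λₙ xₙ` with `λₙ ≥ 0`
and `Σₙ λₙ = 1`. -/
def coSigmaP {E : Type*} [NormedAddCommGroup E] [NormedSpace ℝ E] (x : ℕ → E) : Set E :=
  {y | ∃ lam : ℕ → ℝ, (∀ n, 0 ≤ lam n) ∧
    Tendsto (fun N => ∑ n ∈ Finset.range N, lam n) atTop (𝓝 1) ∧
    Tendsto (fun N => ∑ n ∈ Finset.range N, lam n • x n) atTop (𝓝 y)}

namespace SimonsAux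

variable {E : Type*} [NormedAddCommGroup E] [NormedSpace ℝ E]

/-- Countable convex combinations of the tail `{x k : k ≥ n}`. -/
def Wset (x : ℕ → E) (n : ℕ) : Set E :=
  {y | ∃ lam : ℕ → ℝ, (∀ i, 0 ≤ lam i) ∧ (∀ i, i < n → lam i = 0) ∧ Summable lam ∧
     (∑' i, lam i) = 1 ∧ HasSum (fun i => lam i • x i) y}

lemma Wset_mono (x : ℕ → E) {m n : ℕ} (h : m ≤ n) : Wset x n ⊆ Wset x m := by
  rintro y ⟨lam, h0, hsupp, hs, h1, hsum⟩
  exact ⟨lam, h0, fun i hi => hsupp i (lt_of_lt_of_le hi h), hs, h1, hsum⟩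

lemma single_mem_Wset (x : ℕ → E) {n m : ℕ} (h : n ≤ m) : x m ∈ Wset x n := by
  refine ⟨fun i => if i = m then 1 else 0, ?_, ?_, ?_, ?_, ?_⟩
  · intro i; dsimp only; split <;> norm_num
  · intro i hi; have : i ≠ m := by omega
    simp [this]
  · exact summable_of_ne_finset_zero (s := {m}) (by intro b hb; simp at hb; simp [hb])
  · rw [tsum_ite_eq]
  · have : (fun i => (if i = m then (1:ℝ) else 0) • x i) = fun i => if i = m then x m else 0 := by
      funext i
      by_cases hi : i = m <;> simp [hi]
    rw [this]
    exact hasSum_ite_eq m (x m)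

lemma Wset_subset_coSigmaP (x : ℕ → E) (n : ℕ) : Wset x n ⊆ coSigmaP x := by
  rintro y ⟨lam, h0, _, hs, h1, hsum⟩
  exact ⟨lam, h0, h1 ▸ hs.hasSum.tendsto_sum_nat, hsum.tendsto_sum_nat⟩

lemma norm_le_of_mem_Wset {x : ℕ → E} {K : ℝ} (hK : ∀ i, ‖x i‖ ≤ K) {n : ℕ} {y : E}
    (hy : y ∈ Wset x n) : ‖y‖ ≤ K := by
  obtain ⟨lam, h0, _, hs, h1, hsum⟩ := hy
  have hKn : 0 ≤ K := (norm_nonneg _).trans (hK 0)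
  have hbound : ∀ i, ‖lam i • x i‖ ≤ lam i * K := by
    intro i
    rw [norm_smul, Real.norm_eq_abs, abs_of_nonneg (h0 i)]
    exact mul_le_mul_of_nonneg_left (hK i) (h0 i)
  have hsn : Summable fun i => ‖lam i • x i‖ :=
    Summable.of_nonneg_of_le (fun i => norm_nonneg _) hbound (hs.mul_right K)
  calc ‖y‖ = ‖∑' i, lam i • x i‖ := by rw [hsum.tsum_eq]
    _ ≤ ∑' i, ‖lam i • x i‖ := norm_tsum_le_tsum_norm hsn
    _ ≤ ∑' i, lam i * K := Summable.tsum_le_tsum hbound hsn (hs.mul_right K)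
    _ = (∑' i, lam i) * K := by rw [tsum_mul_right]
    _ = K := by rw [h1, one_mul]

lemma LD_combo {D : Set (StrongDual ℝ E)} {c : ℕ → ℝ} (hc0 : ∀ k, 0 ≤ c k)
    (hc1 : (∑' k, c k) = 1) {y : ℕ → E}
    (hy : ∀ k, c k ≠ 0 → y k ∈ LD D) {w : E} (hw : HasSum (fun k => c k • y k) w) :
    w ∈ LD D := by
  have hm : ∃ m, c m ≠ 0 := by
    by_contra h
    push_neg at h
    rw [tsum_congr (fun k => h k), tsum_zero] at hc1
    norm_num at hc1
  obtain ⟨m, hm⟩ := hm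
  have hcm : 0 < c m := lt_of_le_of_ne (hc0 m) (Ne.symm hm)
  obtain ⟨r, hrneg, hr⟩ := hy m hm
  refine ⟨c m * r, mul_neg_of_pos_of_neg hcm hrneg, fun d hd => ?_⟩
  have hds : HasSum (fun k => c k * d (y k)) (d w) := by
    have := hw.mapL d
    simpa [map_smul, smul_eq_mul] using this
  have hle : ∀ k, c k * d (y k) ≤ (if k = m then c m * r else 0) := by
    intro k
    by_cases hk : k = m
    · subst hk
      simp only [if_pos rfl]
      exact mul_le_mul_of_nonneg_left (hr d hd) (hc0 k)
    · simp only [if_neg hk]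
      by_cases hck : c k = 0
      · simp [hck]
      · obtain ⟨rk, hrkneg, hrk⟩ := hy k hck
        exact mul_nonpos_of_nonneg_of_nonpos (hc0 k)
          ((hrk d hd).trans hrkneg.le)
  calc d w = ∑' k, c k * d (y k) := hds.tsum_eq.symm
    _ ≤ ∑' k, (if k = m then c m * r else 0) :=
        Summable.tsum_le_tsum hle hds.summable ((hasSum_ite_eq m _).summable)
    _ = c m * r := tsum_ite_eq m _

lemma Wset_subset_LD {D : Set (StrongDual ℝ E)} {x : ℕ → E} (hx : ∀ i, x i ∈ LD D)
    (n : ℕ) : Wset x n ⊆ LD D := by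
  rintro y ⟨lam, h0, _, hs, h1, hsum⟩
  exact LD_combo h0 h1 (fun k _ => hx k) hsum

lemma LD_add {D : Set (StrongDual ℝ E)} {a b : E} (ha : a ∈ LD D) (hb : b ∈ LD D) :
    a + b ∈ LD D := by
  obtain ⟨r, hr, hra⟩ := ha
  obtain ⟨s, hs, hsb⟩ := hb
  exact ⟨r + s, by linarith, fun d hd => by
    rw [map_add]; exact add_le_add (hra d hd) (hsb d hd)⟩

lemma LD_smul {D : Set (StrongDual ℝ E)} {a : E} {t : ℝ} (ht : 0 < t) (ha : a ∈ LD D) :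
    t • a ∈ LD D := by
  obtain ⟨r, hr, hra⟩ := ha
  refine ⟨t * r, mul_neg_of_pos_of_neg ht hr, fun d hd => ?_⟩
  rw [map_smul, smul_eq_mul]
  exact mul_le_mul_of_nonneg_left (hra d hd) ht.le

/-- The weight sequence `2^{-(k+1)}`. -/
noncomputable def lamW : ℕ → ℝ := fun k => ((1:ℝ)/2)^(k+1)

lemma lamW_pos (k : ℕ) : 0 < lamW k := by
  unfold lamW; positivity

lemma lamW_eq (k : ℕ) : lamW k = 1/2/2^k := by
  unfold lamW
  rw [pow_succ, one_div_pow]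
  ring

lemma lamW_succ_eq (n : ℕ) : lamW n = ((1:ℝ)/2)^n / 2 := by
  unfold lamW
  rw [pow_succ]
  ring

lemma lamW_summable : Summable lamW :=
  (summable_geometric_two' 1).congr fun k => (lamW_eq k).symm

lemma lamW_tsum : (∑' k, lamW k) = 1 := by
  rw [tsum_congr lamW_eq]
  exact tsum_geometric_two' 1

lemma lamW_finsum (n : ℕ) : ∑ k ∈ Finset.range n, lamW k = 1 - ((1:ℝ)/2)^n := by
  induction n with
  | zero => simp
  | succ n ih =>
    rw [Finset.sum_range_succ, ih, lamW_succ_eq, pow_succ]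
    ring

/-- finite head plus tail-weighted element stays in `LD`. -/
lemma hd_mem_LD {D : Set (StrongDual ℝ E)} :
    ∀ (n : ℕ) (f : ℕ → E) (y : E), (∀ j, j < n → f j ∈ LD D) → y ∈ LD D →
      (∑ j ∈ Finset.range n, lamW j • f j) + ((1:ℝ)/2)^n • y ∈ LD D := by
  intro n
  induction n with
  | zero => intro f y _ hy; simpa using hy
  | succ n ih =>
    intro f y hf hy
    have hkey : (∑ j ∈ Finset.range (n+1), lamW j • f j) + ((1:ℝ)/2)^(n+1) • y
        = (∑ j ∈ Finset.range n, lamW j • f j)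
          + ((1:ℝ)/2)^n • (((1:ℝ)/2) • f n + ((1:ℝ)/2) • y) := by
      rw [Finset.sum_range_succ, smul_add, smul_smul, smul_smul, ← pow_succ, add_assoc]
      rw [show lamW n = ((1:ℝ)/2)^(n+1) from rfl]
    rw [hkey]
    refine ih f _ (fun j hj => hf j (by omega)) ?_
    have h1 : ((1:ℝ)/2) • f n ∈ LD D := LD_smul (by norm_num) (hf n (by omega))
    have h2 : ((1:ℝ)/2) • y ∈ LD D := LD_smul (by norm_num) hy
    exact LD_add h1 h2

variable [CompleteSpace E]

lemma combo_mem_Wset {x : ℕ → E} {K : ℝ} (hK : ∀ i, ‖x i‖ ≤ K) (n : ℕ) {c : ℕ → ℝ}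
    (hc0 : ∀ k, 0 ≤ c k) (hcs : Summable c) (hc1 : (∑' k, c k) = 1) {y : ℕ → E}
    (hy : ∀ k, c k ≠ 0 → y k ∈ Wset x n) {w : E} (hw : HasSum (fun k => c k • y k) w) :
    w ∈ Wset x n := by
  classical
  have hδ : ∀ k, ∃ lam : ℕ → ℝ, (∀ i, 0 ≤ lam i) ∧ (∀ i, i < n → lam i = 0) ∧ Summable lam ∧
      (∑' i, lam i) = 1 ∧ HasSum (fun i => lam i • x i) (if c k ≠ 0 then y k else x n) := by
    intro k
    by_cases h : c k ≠ 0
    · obtain ⟨lam, h0, h1, h2, h3, h4⟩ := hy k h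
      exact ⟨lam, h0, h1, h2, h3, by rwa [if_pos h]⟩
    · obtain ⟨lam, h0, h1, h2, h3, h4⟩ := single_mem_Wset x (le_refl n)
      exact ⟨lam, h0, h1, h2, h3, by rwa [if_neg h]⟩
  choose L hL0 hLsupp hLsum hL1 hLx using hδ
  set y' : ℕ → E := fun k => if c k ≠ 0 then y k else x n with hy'
  have hw' : HasSum (fun k => c k • y' k) w := by
    have hcy' : (fun k => c k • y' k) = fun k => c k • y k := by
      funext k
      by_cases h : c k ≠ 0
      · simp only [hy', if_pos h]
      · push_neg at h
        simp [h]
    rwa [hcy']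
  set F : ℕ × ℕ → ℝ := fun p => c p.1 * L p.1 p.2 with hF
  have hF0 : ∀ p, 0 ≤ F p := fun p => mul_nonneg (hc0 _) (hL0 _ _)
  have hFrow : ∀ k, Summable fun i => F (k, i) := fun k => (hLsum k).mul_left (c k)
  have hFrowval : ∀ k, (∑' i, F (k, i)) = c k := by
    intro k
    simp only [hF]
    rw [tsum_mul_left, hL1 k, mul_one]
  have hFrowsum : Summable fun k => ∑' i, F (k, i) := by
    simpa only [hFrowval] using hcs
  have hFs : Summable F := (summable_prod_of_nonneg (fun p => hF0 p)).2 ⟨hFrow, hFrowsum⟩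
  have hFswap : Summable fun p : ℕ × ℕ => F p.swap := hFs.prod_symm
  have hcols : ∀ i, Summable fun k => F (k, i) := fun i =>
    ((summable_prod_of_nonneg (fun p => hF0 p.swap)).1 hFswap).1 i
  set ν : ℕ → ℝ := fun i => ∑' k, F (k, i) with hν
  have hν0 : ∀ i, 0 ≤ ν i := fun i => tsum_nonneg fun k => hF0 _
  have hνs : Summable ν :=
    ((summable_prod_of_nonneg (fun p => hF0 p.swap)).1 hFswap).2
  have hν1 : (∑' i, ν i) = 1 := by
    have h2 : ∑' i, ∑' k, F (k, i) = ∑' k, ∑' i, F (k, i) :=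
      Summable.tsum_comm' (f := fun k i => F (k, i)) hFs hFrow hcols
    calc (∑' i, ν i) = ∑' k, ∑' i, F (k, i) := h2
      _ = ∑' k, c k := tsum_congr hFrowval
      _ = 1 := hc1
  have hνsupp : ∀ i, i < n → ν i = 0 := by
    intro i hi
    have hz : ∀ k, F (k, i) = 0 := by
      intro k
      simp only [hF]
      rw [hLsupp k i hi, mul_zero]
    simp only [hν, hz, tsum_zero]
  set G : ℕ × ℕ → E := fun p => F p • x p.2 with hG
  have hKn : 0 ≤ K := (norm_nonneg _).trans (hK 0)
  have hGnorm : ∀ p, ‖G p‖ ≤ F p * K := by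
    intro p
    simp only [hG]
    rw [norm_smul, Real.norm_eq_abs, abs_of_nonneg (hF0 p)]
    exact mul_le_mul_of_nonneg_left (hK _) (hF0 p)
  have hGs : Summable G :=
    Summable.of_norm (Summable.of_nonneg_of_le (fun p => norm_nonneg _) hGnorm (hFs.mul_right K))
  have hrowG : ∀ k, Summable fun i => G (k, i) := by
    intro k
    refine Summable.of_norm (Summable.of_nonneg_of_le (fun i => norm_nonneg _)
      (fun i => hGnorm (k, i)) (((hFrow k)).mul_right K))
  have hcolG : ∀ i, Summable fun k => G (k, i) := by
    intro i
    refine Summable.of_norm (Summable.of_nonneg_of_le (fun k => norm_nonneg _)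
      (fun k => hGnorm (k, i)) (((hcols i)).mul_right K))
  have hT1 : ∑' p, G p = w := by
    rw [Summable.tsum_prod' hGs hrowG]
    have hrowval : ∀ k, ∑' i, G (k, i) = c k • y' k := by
      intro k
      have heq : (fun i => G (k, i)) = fun i => c k • (L k i • x i) := by
        funext i
        simp only [hG, hF, smul_smul]
      rw [heq, Summable.tsum_const_smul _ (hLx k).summable, (hLx k).tsum_eq]
    rw [tsum_congr hrowval, hw'.tsum_eq]
  have hT2 : ∑' p, G p = ∑' i, ν i • x i := by
    have h2 : ∑' i, ∑' k, G (k, i) = ∑' k, ∑' i, G (k, i) :=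
      Summable.tsum_comm' (f := fun k i => G (k, i)) hGs hrowG hcolG
    rw [Summable.tsum_prod' hGs hrowG, ← h2]
    refine tsum_congr fun i => ?_
    have heq : (fun k => G (k, i)) = fun k => F (k, i) • x i := by
      funext k
      simp only [hG]
    rw [heq, Summable.tsum_smul_const (hcols i) (x i)]
  have hsum : Summable fun i => ν i • x i := by
    refine Summable.of_norm (Summable.of_nonneg_of_le (fun i => norm_nonneg _)
      (fun i => ?_) (hνs.mul_right K))
    rw [norm_smul, Real.norm_eq_abs, abs_of_nonneg (hν0 i)]
    exact mul_le_mul_of_nonneg_left (hK _) (hν0 i)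
  have hfin : HasSum (fun i => ν i • x i) w := by
    have : ∑' i, ν i • x i = w := by rw [← hT2, hT1]
    exact this ▸ hsum.hasSum
  exact ⟨ν, hν0, hνsupp, hνs, hν1, hfin⟩

open Classical in
noncomputable def sFun (C : Set (StrongDual ℝ E)) (y : E) : ℝ :=
  if h : ∃ r : ℝ, IsLUB ((fun c : StrongDual ℝ E => c y) '' C) r then h.choose else 0

lemma sFun_spec {D C : Set (StrongDual ℝ E)}
    (hfin : ∀ v ∈ LD D, ∃ r : ℝ, IsLUB ((fun c : StrongDual ℝ E => c v) '' C) r)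
    {y : E} (hy : y ∈ LD D) :
    IsLUB ((fun c : StrongDual ℝ E => c y) '' C) (sFun C y) := by
  have h := hfin y hy
  unfold sFun
  rw [dif_pos h]
  exact h.choose_spec

lemma le_sFun {D C : Set (StrongDual ℝ E)}
    (hfin : ∀ v ∈ LD D, ∃ r : ℝ, IsLUB ((fun c : StrongDual ℝ E => c v) '' C) r)
    {y : E} (hy : y ∈ LD D) {c : StrongDual ℝ E} (hc : c ∈ C) :
    c y ≤ sFun C y :=
  (sFun_spec hfin hy).1 ⟨c, hc, rfl⟩

/-- The supremum over the weak-star closed set `C` is attained at every point of `L_D`. -/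
lemma exists_isMax {D C : Set (StrongDual ℝ E)}
    (hDcpt : IsCompact (StrongDual.toWeakDual '' D))
    (hCcl : IsClosed (StrongDual.toWeakDual '' C))
    (hfin : ∀ v ∈ LD D, ∃ r : ℝ, IsLUB ((fun c : StrongDual ℝ E => c v) '' C) r)
    (hCne : C.Nonempty) {y : E} (hy : y ∈ LD D) :
    ∃ c ∈ C, ∀ c' ∈ C, c' y ≤ c y := by
  classical
  obtain ⟨r, hrneg, hr⟩ := id hy
  -- a uniform bound on the norms of elements of `D`
  have hDpt : ∀ v : E, ∃ b : ℝ, ∀ i : D, ‖(i : StrongDual ℝ E) v‖ ≤ b := by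
    intro v
    have hcpt : IsCompact ((fun φ : WeakDual ℝ E => φ v) '' (StrongDual.toWeakDual '' D)) :=
      hDcpt.image (WeakDual.eval_continuous v)
    obtain ⟨b, hb⟩ := (Metric.isBounded_iff_subset_closedBall (0:ℝ)).1 hcpt.isBounded
    refine ⟨b, fun i => ?_⟩
    have hmem : (i : StrongDual ℝ E) v ∈ Metric.closedBall (0:ℝ) b :=
      hb ⟨StrongDual.toWeakDual (i : StrongDual ℝ E), ⟨_, i.2, rfl⟩, rfl⟩
    simpa [Real.norm_eq_abs, Metric.mem_closedBall, Real.dist_eq] using hmem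
  obtain ⟨M0, hM0⟩ := banach_steinhaus (g := fun i : D => (i : StrongDual ℝ E)) hDpt
  set M := max M0 0 with hM
  have hMD : ∀ d ∈ D, ‖d‖ ≤ M := fun d hd => (hM0 ⟨d, hd⟩).trans (le_max_left _ _)
  have hM0' : 0 ≤ M := le_max_right _ _
  set δ := -r / (2 * (M + 1)) with hδ
  have hδpos : 0 < δ := div_pos (by linarith) (by linarith)
  have hball : ∀ u : E, ‖u‖ ≤ δ → y + u ∈ LD D := by
    intro u hu
    refine ⟨r/2, by linarith, fun d hd => ?_⟩
    have h1 : d u ≤ ‖d‖ * ‖u‖ := le_trans (le_abs_self _) (d.le_opNorm u)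
    have h2 : ‖d‖ * ‖u‖ ≤ M * δ :=
      mul_le_mul (hMD d hd) hu (norm_nonneg u) hM0'
    have h3 : M * δ ≤ -r / 2 := by
      have h4 : M * (-r) ≤ (M+1) * (-r) := by nlinarith
      calc M * δ = (M * (-r)) / (2*(M+1)) := by rw [hδ]; ring
        _ ≤ ((M+1) * (-r)) / (2*(M+1)) := by gcongr <;> linarith
        _ = -r / 2 := by
            rw [div_eq_div_iff (ne_of_gt (by linarith : (0:ℝ) < 2*(M+1)))
              (by norm_num : (2:ℝ) ≠ 0)]
            ring
    have h5 : d (y + u) = d y + d u := map_add d y u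
    have h6 : d y ≤ r := hr d hd
    linarith [h1, h2, h3, h5, h6, hr d hd]
  have hsy := sFun_spec hfin hy
  obtain ⟨a, haS, hta, _⟩ := hsy.exists_between (show sFun C y - 1 < sFun C y by linarith)
  obtain ⟨c₁, hc₁C, hc₁eq⟩ := haS
  set t := sFun C y - 1 with ht
  set Ct : Set (StrongDual ℝ E) := {c | c ∈ C ∧ t ≤ c y} with hCt
  have hc₁Ct : c₁ ∈ Ct := ⟨hc₁C, by simp only [ht]; rw [show c₁ y = a from hc₁eq]; linarith⟩
  have hCtpt : ∀ v : E, ∃ b : ℝ, ∀ i : Ct, ‖(i : StrongDual ℝ E) v‖ ≤ b := by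
    intro v
    by_cases hv : v = 0
    · exact ⟨0, fun i => by simp [hv]⟩
    · have hvn : 0 < ‖v‖ := norm_pos_iff.2 hv
      set u := (δ / ‖v‖) • v with hu
      have hun : ‖u‖ ≤ δ := by
        rw [hu, norm_smul, Real.norm_eq_abs, abs_of_nonneg (by positivity)]
        rw [div_mul_cancel₀ _ (ne_of_gt hvn)]
      have hyu : y + u ∈ LD D := hball u hun
      have hyu' : y + -u ∈ LD D := hball (-u) (by rwa [norm_neg])
      refine ⟨(‖v‖/δ) * max (sFun C (y+u) - t) (sFun C (y + -u) - t), fun i => ?_⟩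
      obtain ⟨hiC, hit⟩ := i.2
      have b1 : (i : StrongDual ℝ E) u ≤ sFun C (y+u) - t := by
        have e1 : (i : StrongDual ℝ E) u = i.1 (y+u) - i.1 y := by
          rw [map_add]; ring
        rw [e1]
        exact sub_le_sub (le_sFun hfin hyu hiC) hit
      have b2 : -((i : StrongDual ℝ E) u) ≤ sFun C (y + -u) - t := by
        have e2 : -((i : StrongDual ℝ E) u) = i.1 (y + -u) - i.1 y := by
          rw [map_add, map_neg]; ring
        rw [e2]
        exact sub_le_sub (le_sFun hfin hyu' hiC) hit
      have babs : |(i : StrongDual ℝ E) u| ≤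
          max (sFun C (y+u) - t) (sFun C (y + -u) - t) := by
        rw [abs_le]
        constructor
        · have := b2.trans (le_max_right (sFun C (y+u) - t) (sFun C (y + -u) - t))
          linarith
        · exact b1.trans (le_max_left _ _)
      have hvu : (i : StrongDual ℝ E) v = (‖v‖/δ) * ((i : StrongDual ℝ E) u) := by
        have hveq : v = (‖v‖/δ) • u := by
          rw [hu, smul_smul]
          rw [show ‖v‖ / δ * (δ / ‖v‖) = 1 by field_simp]
          rw [one_smul]
        conv_lhs => rw [hveq]
        rw [map_smul, smul_eq_mul]
      rw [Real.norm_eq_abs, hvu, abs_mul, abs_of_nonneg (by positivity)]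
      exact mul_le_mul_of_nonneg_left babs (by positivity)
  obtain ⟨Mc, hMc⟩ := banach_steinhaus (g := fun i : Ct => (i : StrongDual ℝ E)) hCtpt
  set S : Set (WeakDual ℝ E) := StrongDual.toWeakDual '' Ct with hS
  have hSeq : S = (StrongDual.toWeakDual '' C) ∩ {φ : WeakDual ℝ E | t ≤ φ y} := by
    ext φ
    constructor
    · rintro ⟨c, ⟨hcC, hct⟩, rfl⟩
      exact ⟨⟨c, hcC, rfl⟩, hct⟩
    · rintro ⟨⟨c, hcC, rfl⟩, hφ⟩
      exact ⟨c, ⟨hcC, hφ⟩, rfl⟩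
  have hScl : IsClosed S := by
    rw [hSeq]
    exact hCcl.inter (isClosed_le continuous_const (WeakDual.eval_continuous y))
  have hSb : Bornology.IsBounded (StrongDual.toWeakDual ⁻¹' S) := by
    have hpre : StrongDual.toWeakDual ⁻¹' S = Ct :=
      Set.preimage_image_eq _ (LinearEquiv.injective _)
    rw [hpre]
    exact (isBounded_iff_forall_norm_le).2 ⟨Mc, fun c hc => hMc ⟨c, hc⟩⟩
  have hScpt : IsCompact S := WeakDual.isCompact_of_bounded_of_closed hSb hScl
  have hSne : S.Nonempty := ⟨_, ⟨c₁, hc₁Ct, rfl⟩⟩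
  obtain ⟨φ, hφS, hφmax⟩ := hScpt.exists_isMaxOn hSne
    ((WeakDual.eval_continuous y).continuousOn)
  obtain ⟨cm, hcmCt, rfl⟩ := hφS
  refine ⟨cm, hcmCt.1, fun c' hc' => ?_⟩
  by_cases h : t ≤ c' y
  · exact hφmax ⟨c', ⟨hc', h⟩, rfl⟩
  · push_neg at h
    have h1 : c₁ y ≤ cm y := hφmax ⟨c₁, hc₁Ct, rfl⟩
    have h2 : t ≤ c₁ y := hc₁Ct.2
    linarith

/-- The key construction: Simons' inequality for the set `C` itself. -/
lemma key {D C : Set (StrongDual ℝ E)}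
    (hDcpt : IsCompact (StrongDual.toWeakDual '' D))
    (hCcl : IsClosed (StrongDual.toWeakDual '' C))
    (hfin : ∀ v ∈ LD D, ∃ r : ℝ, IsLUB ((fun c : StrongDual ℝ E => c v) '' C) r)
    (hCne : C.Nonempty)
    {x : ℕ → E} (hx : ∀ n, x n ∈ LD D) {K : ℝ} (hK : ∀ i, ‖x i‖ ≤ K)
    {ε : ℝ} (hε : 0 < ε) :
    ∃ z ∈ coSigmaP x, ∃ ρ : ℝ, IsLUB ((fun c : StrongDual ℝ E => c z) '' C) ρ ∧
      ∃ c ∈ C, ρ - 2*ε ≤ limsup (fun j => c (x j)) atTop := by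
  classical
  obtain ⟨c₀, hc₀⟩ := hCne
  have hKn : 0 ≤ K := (norm_nonneg _).trans (hK 0)
  set εk : ℕ → ℝ := fun k => ε/4 * ((1:ℝ)/4)^k with hεk
  have hεk_pos : ∀ k, 0 < εk k := fun k => mul_pos (by linarith) (by positivity)
  -- the near-optimal choice at each stage
  have exists_good : ∀ (n : ℕ) (f : ℕ → E), (∀ j, j < n → f j ∈ Wset x j) →
      ∃ y, y ∈ Wset x n ∧ ∀ y' ∈ Wset x n,
        sFun C ((∑ j ∈ Finset.range n, lamW j • f j) + ((1:ℝ)/2)^n • y)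
          ≤ sFun C ((∑ j ∈ Finset.range n, lamW j • f j) + ((1:ℝ)/2)^n • y') + εk n := by
    intro n f hf
    set hdn := (∑ j ∈ Finset.range n, lamW j • f j) with hhdn
    have hmemLD : ∀ y' ∈ Wset x n, hdn + ((1:ℝ)/2)^n • y' ∈ LD D := fun y' hy' =>
      hd_mem_LD n f y' (fun j hj => Wset_subset_LD hx j (hf j hj)) (Wset_subset_LD hx n hy')
    set Sv : Set ℝ := (fun y' => sFun C (hdn + ((1:ℝ)/2)^n • y')) '' (Wset x n) with hSv
    have hSne : Sv.Nonempty := ⟨_, ⟨x n, single_mem_Wset x le_rfl, rfl⟩⟩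
    have hSbdd : BddBelow Sv := by
      refine ⟨c₀ hdn - ‖c₀‖ * K, ?_⟩
      rintro s ⟨y', hy', rfl⟩
      have h1 : c₀ (hdn + ((1:ℝ)/2)^n • y') ≤ sFun C (hdn + ((1:ℝ)/2)^n • y') :=
        le_sFun hfin (hmemLD y' hy') hc₀
      have h2 : c₀ (hdn + ((1:ℝ)/2)^n • y') = c₀ hdn + ((1:ℝ)/2)^n * c₀ y' := by
        rw [map_add, map_smul, smul_eq_mul]
      have h3 : |c₀ y'| ≤ ‖c₀‖ * K := by
        rw [← Real.norm_eq_abs]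
        exact le_trans (c₀.le_opNorm y')
          (mul_le_mul_of_nonneg_left (norm_le_of_mem_Wset hK hy') (norm_nonneg _))
      have h5 : -(‖c₀‖ * K) ≤ c₀ y' := neg_le_of_abs_le h3
      have hp0 : (0:ℝ) ≤ ((1:ℝ)/2)^n := by positivity
      have hp1 : ((1:ℝ)/2)^n ≤ 1 := by
        apply pow_le_one₀ <;> norm_num
      have hcK : 0 ≤ ‖c₀‖ * K := mul_nonneg (norm_nonneg _) hKn
      have h6 : -(‖c₀‖ * K) ≤ ((1:ℝ)/2)^n * c₀ y' := by nlinarith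
      linarith
    obtain ⟨s, hsS, hslt⟩ := exists_lt_of_csInf_lt hSne (lt_add_of_pos_right _ (hεk_pos n))
    obtain ⟨yg, hygW, hygeq⟩ := hsS
    refine ⟨yg, hygW, fun y' hy' => ?_⟩
    have hinf_le : sInf Sv ≤ sFun C (hdn + ((1:ℝ)/2)^n • y') := csInf_le hSbdd ⟨y', hy', rfl⟩
    have : sFun C (hdn + ((1:ℝ)/2)^n • yg) = s := hygeq
    linarith
  -- the recursive construction
  have hpick : ∀ (n : ℕ) (f : ℕ → E), ∃ y : E, (∀ j, j < n → f j ∈ Wset x j) →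
      y ∈ Wset x n ∧ ∀ y' ∈ Wset x n,
        sFun C ((∑ j ∈ Finset.range n, lamW j • f j) + ((1:ℝ)/2)^n • y)
          ≤ sFun C ((∑ j ∈ Finset.range n, lamW j • f j) + ((1:ℝ)/2)^n • y') + εk n := by
    intro n f
    by_cases h : ∀ j, j < n → f j ∈ Wset x j
    · obtain ⟨y, h1, h2⟩ := exists_good n f h
      exact ⟨y, fun _ => ⟨h1, h2⟩⟩
    · exact ⟨x n, fun hc => absurd hc h⟩
  choose pick hpickspec using hpick
  let A : ℕ → ℕ → E := fun n => Nat.rec (motive := fun _ => ℕ → E) (fun _ => x 0)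
    (fun m fm => Function.update fm m (pick m fm)) n
  let Y : ℕ → E := fun n => A (n+1) n
  have hAsucc : ∀ m, A (m+1) = Function.update (A m) m (pick m (A m)) := fun m => rfl
  have hYpick : ∀ n, Y n = pick n (A n) := by
    intro n
    show A (n+1) n = pick n (A n)
    rw [hAsucc n, Function.update_self]
  have stab : ∀ n j, j < n → A n j = Y j := by
    intro n
    induction n with
    | zero => intro j hj; omega
    | succ n ih =>
      intro j hj
      rcases Nat.lt_succ_iff_lt_or_eq.1 hj with hj' | rfl
      · rw [hAsucc n, Function.update_of_ne (by omega : j ≠ n)]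
        exact ih j hj'
      · rfl
  have hYW : ∀ n, Y n ∈ Wset x n := by
    intro n
    induction n using Nat.strong_induction_on with
    | _ n ih =>
      have hcond : ∀ j, j < n → A n j ∈ Wset x j := fun j hj => by
        rw [stab n j hj]; exact ih j hj
      rw [hYpick n]
      exact (hpickspec n (A n) hcond).1
  set hdY : ℕ → E := fun n => ∑ j ∈ Finset.range n, lamW j • Y j with hhdY
  have hgood : ∀ n, ∀ y' ∈ Wset x n,
      sFun C (hdY n + ((1:ℝ)/2)^n • Y n) ≤ sFun C (hdY n + ((1:ℝ)/2)^n • y') + εk n := by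
    intro n y' hy'
    have hcond : ∀ j, j < n → A n j ∈ Wset x j := fun j hj => by
      rw [stab n j hj]; exact hYW j
    have hq := (hpickspec n (A n) hcond).2 y' hy'
    have hheq : (∑ j ∈ Finset.range n, lamW j • A n j) = hdY n :=
      Finset.sum_congr rfl fun j hj => by rw [stab n j (Finset.mem_range.1 hj)]
    rw [hheq, ← hYpick n] at hq
    exact hq
  -- the series z
  have hYnorm : ∀ k, ‖Y k‖ ≤ K := fun k => norm_le_of_mem_Wset hK (hYW k)
  have hsummable : Summable fun k => lamW k • Y k := by
    refine Summable.of_norm (Summable.of_nonneg_of_le (fun k => norm_nonneg _) (fun k => ?_)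
      (lamW_summable.mul_right K))
    rw [norm_smul, Real.norm_eq_abs, abs_of_nonneg (lamW_pos k).le]
    exact mul_le_mul_of_nonneg_left (hYnorm k) (lamW_pos k).le
  set z := ∑' k, lamW k • Y k with hzdef
  have hzsum : HasSum (fun k => lamW k • Y k) z := hsummable.hasSum
  have hzW : z ∈ Wset x 0 := combo_mem_Wset hK 0 (fun k => (lamW_pos k).le) lamW_summable
    lamW_tsum (fun k _ => Wset_mono x (Nat.zero_le k) (hYW k)) hzsum
  have hzLD : z ∈ LD D := Wset_subset_LD hx 0 hzW
  set ρ := sFun C z with hρdef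
  have hρ : IsLUB ((fun c : StrongDual ℝ E => c z) '' C) ρ := sFun_spec hfin hzLD
  obtain ⟨c, hcC, hcmax⟩ := exists_isMax hDcpt hCcl hfin ⟨c₀, hc₀⟩ hzLD
  have hcz : c z = ρ := by
    have h1 : c z ≤ ρ := hρ.1 ⟨c, hcC, rfl⟩
    have h2 : ρ ≤ c z := hρ.2 (by rintro s ⟨c', hc', rfl⟩; exact hcmax c' hc')
    linarith
  -- tails
  have htail : ∀ n, HasSum (fun k => if k < n then 0 else lamW k • Y k) (z - hdY n) := by
    intro n
    have h1 : HasSum (fun k => if k < n then lamW k • Y k else 0) (hdY n) := by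
      have h1' := hasSum_sum_of_ne_finset_zero (L := SummationFilter.unconditional ℕ) (s := Finset.range n)
        (f := fun k => if k < n then lamW k • Y k else (0:E))
        (fun b hb => if_neg (by simpa using hb))
      have heq : ∑ b ∈ Finset.range n, (if b < n then lamW b • Y b else (0:E)) = hdY n :=
        Finset.sum_congr rfl fun b hb => if_pos (Finset.mem_range.1 hb)
      rwa [heq] at h1'
    have h2 := hzsum.sub h1
    have heq2 : (fun k => lamW k • Y k - (if k < n then lamW k • Y k else 0))
        = fun k => if k < n then 0 else lamW k • Y k := by
      funext k
      by_cases hk : k < n <;> simp [hk]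
    rwa [heq2] at h2
  have htail_lam : ∀ n, HasSum (fun k => if k < n then 0 else lamW k) (((1:ℝ)/2)^n) := by
    intro n
    have h1 : HasSum (fun k => if k < n then lamW k else 0) (1 - ((1:ℝ)/2)^n) := by
      have h1' := hasSum_sum_of_ne_finset_zero (L := SummationFilter.unconditional ℕ) (s := Finset.range n)
        (f := fun k => if k < n then lamW k else (0:ℝ))
        (fun b hb => if_neg (by simpa using hb))
      have heq : ∑ b ∈ Finset.range n, (if b < n then lamW b else (0:ℝ))
          = 1 - ((1:ℝ)/2)^n := by
        rw [Finset.sum_congr rfl fun b hb => if_pos (Finset.mem_range.1 hb)]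
        exact lamW_finsum n
      rwa [heq] at h1'
    have h0 : HasSum lamW 1 := lamW_tsum ▸ lamW_summable.hasSum
    have h2 := h0.sub h1
    have heq2 : (fun k => lamW k - (if k < n then lamW k else 0))
        = fun k => if k < n then 0 else lamW k := by
      funext k
      by_cases hk : k < n <;> simp [hk]
    rw [heq2] at h2
    rwa [sub_sub_cancel] at h2
  have hpow1 : ∀ n : ℕ, ((1:ℝ)/2)^n * (2:ℝ)^n = 1 := by
    intro n
    rw [← mul_pow]
    norm_num
  have hwn : ∀ n, ((2:ℝ)^n • (z - hdY n)) ∈ Wset x n := by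
    intro n
    have hsum2 : HasSum (fun k => (if k < n then 0 else (2:ℝ)^n * lamW k) • Y k)
        ((2:ℝ)^n • (z - hdY n)) := by
      have h2 := (htail n).const_smul ((2:ℝ)^n)
      have heq : (fun k => (2:ℝ)^n • (if k < n then 0 else lamW k • Y k))
          = fun k => (if k < n then 0 else (2:ℝ)^n * lamW k) • Y k := by
        funext k
        by_cases hk : k < n <;> simp [hk, smul_smul]
      rwa [heq] at h2
    have hc1 : HasSum (fun k => if k < n then 0 else (2:ℝ)^n * lamW k) 1 := by
      have h2 := (htail_lam n).mul_left ((2:ℝ)^n)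
      have heq : (fun k => (2:ℝ)^n * (if k < n then 0 else lamW k))
          = fun k => if k < n then 0 else (2:ℝ)^n * lamW k := by
        funext k
        by_cases hk : k < n <;> simp [hk]
      rw [heq] at h2
      have : (2:ℝ)^n * ((1:ℝ)/2)^n = 1 := by rw [mul_comm]; exact hpow1 n
      rwa [this] at h2
    refine combo_mem_Wset hK n ?_ hc1.summable hc1.tsum_eq (fun k hk => ?_) hsum2
    · intro k
      by_cases hk : k < n
      · simp [hk]
      · simp only [if_neg hk]
        exact mul_nonneg (by positivity) (lamW_pos k).le
    · have hkn : n ≤ k := by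
        by_contra hkn
        push_neg at hkn
        simp [hkn] at hk
      exact Wset_mono x hkn (hYW k)
  have hψ : ∀ n, c (hdY n) + ((1:ℝ)/2)^n * c (Y n) ≤ ρ + εk n := by
    intro n
    have hgn := hgood n ((2:ℝ)^n • (z - hdY n)) (hwn n)
    have hid : hdY n + ((1:ℝ)/2)^n • ((2:ℝ)^n • (z - hdY n)) = z := by
      rw [smul_smul, hpow1 n, one_smul]
      abel
    rw [hid, ← hρdef] at hgn
    have hψLD : hdY n + ((1:ℝ)/2)^n • Y n ∈ LD D :=
      hd_mem_LD n Y (Y n) (fun j hj => Wset_subset_LD hx j (hYW j)) (Wset_subset_LD hx n (hYW n))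
    have h1 : c (hdY n + ((1:ℝ)/2)^n • Y n) ≤ sFun C (hdY n + ((1:ℝ)/2)^n • Y n) :=
      le_sFun hfin hψLD hcC
    have h2 : c (hdY n + ((1:ℝ)/2)^n • Y n) = c (hdY n) + ((1:ℝ)/2)^n * c (Y n) := by
      rw [map_add, map_smul, smul_eq_mul]
    linarith
  set R : ℕ → ℝ := fun n => ρ - c (hdY n) with hR
  have hhd0 : hdY 0 = 0 := by simp [hhdY]
  have hR0 : R 0 = ρ := by simp [hR, hhd0]
  have hRsucc : ∀ n, R n / 2 - εk n / 2 ≤ R (n+1) := by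
    intro n
    have h1 := hψ n
    have h2 : c (hdY (n+1)) = c (hdY n) + lamW n * c (Y n) := by
      have : hdY (n+1) = hdY n + lamW n • Y n := Finset.sum_range_succ _ n
      rw [this, map_add, map_smul, smul_eq_mul]
    have h3 := lamW_succ_eq n
    have h4 : ((1:ℝ)/2)^n * c (Y n) ≤ R n + εk n := by
      simp only [hR]
      linarith
    have h5 : lamW n * c (Y n) ≤ (R n + εk n) / 2 := by
      rw [h3]
      linarith
    simp only [hR, h2]
    simp only [hR] at h5
    linarith
  set sn : ℕ → ℝ := fun n => ∑ k ∈ Finset.range n, (2:ℝ)^k * εk k with hsn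
  have hsnle : ∀ n, sn n ≤ ε/2 := by
    intro n
    have hterm : ∀ k : ℕ, (2:ℝ)^k * εk k = ε/4 * ((1:ℝ)/2)^k := by
      intro k
      simp only [hεk]
      calc (2:ℝ)^k * (ε/4 * ((1:ℝ)/4)^k) = ε/4 * (((2:ℝ) * ((1:ℝ)/4))^k) := by
            rw [mul_pow]; ring
        _ = ε/4 * ((1:ℝ)/2)^k := by norm_num
    simp only [hsn]
    rw [Finset.sum_congr rfl fun k _ => hterm k, ← Finset.mul_sum]
    have := sum_geometric_two_le n
    nlinarith
  have hRlb : ∀ n, ((1:ℝ)/2)^n * (ρ - sn n) ≤ R n := by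
    intro n
    induction n with
    | zero => simp [hR0, hsn]
    | succ n ih =>
      have h1 := hRsucc n
      have h2 : sn (n+1) = sn n + (2:ℝ)^n * εk n := Finset.sum_range_succ _ n
      have h3 : ((1:ℝ)/2)^(n+1) * (ρ - sn (n+1))
          = (((1:ℝ)/2)^n * (ρ - sn n))/2 - (((1:ℝ)/2)^n * (2:ℝ)^n) * εk n / 2 := by
        rw [h2, pow_succ]
        ring
      rw [h3, hpow1 n]
      linarith
  have hRlb' : ∀ n, ((1:ℝ)/2)^n * (ρ - ε/2) ≤ R n := by
    intro n
    refine le_trans ?_ (hRlb n)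
    have hp : (0:ℝ) ≤ ((1:ℝ)/2)^n := by positivity
    have := hsnle n
    nlinarith
  have hfreqY : ∀ n, ∃ k, n ≤ k ∧ ρ - ε < c (Y k) := by
    intro n
    by_contra hcontra
    push_neg at hcontra
    have hmap : HasSum (fun k => if k < n then 0 else lamW k * c (Y k)) (c (z - hdY n)) := by
      have h2 := (htail n).mapL c
      have heq : (fun k => c (if k < n then 0 else lamW k • Y k))
          = fun k => if k < n then 0 else lamW k * c (Y k) := by
        funext k
        by_cases hk : k < n <;> simp [hk]
      rwa [heq] at h2
    have hub : HasSum (fun k => if k < n then 0 else lamW k * (ρ - ε))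
        (((1:ℝ)/2)^n * (ρ - ε)) := by
      have h2 := (htail_lam n).mul_right (ρ - ε)
      have heq : (fun k => (if k < n then 0 else lamW k) * (ρ - ε))
          = fun k => if k < n then 0 else lamW k * (ρ - ε) := by
        funext k
        by_cases hk : k < n <;> simp [hk]
      rwa [heq] at h2
    have hle : ∀ k, (if k < n then 0 else lamW k * c (Y k))
        ≤ (if k < n then 0 else lamW k * (ρ - ε)) := by
      intro k
      by_cases hk : k < n
      · simp [hk]
      · simp only [if_neg hk]
        exact mul_le_mul_of_nonneg_left (hcontra k (by omega)) (lamW_pos k).le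
    have hRn : c (z - hdY n) ≤ ((1:ℝ)/2)^n * (ρ - ε) := hasSum_le hle hmap hub
    have hczn : c (z - hdY n) = R n := by
      rw [map_sub, hcz]
    have := hRlb' n
    have hppos : (0:ℝ) < ((1:ℝ)/2)^n := by positivity
    rw [hczn] at hRn
    nlinarith
  have hfreqX : ∀ n, ∃ j, n ≤ j ∧ ρ - 2*ε < c (x j) := by
    intro n
    obtain ⟨k, hkn, hkv⟩ := hfreqY n
    obtain ⟨lamk, hl0, hlsupp, hlsum, hl1, hlx⟩ := hYW k
    by_contra hcontra
    push_neg at hcontra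
    have hmap : HasSum (fun j => lamk j * c (x j)) (c (Y k)) := by
      have h2 := hlx.mapL c
      simpa [map_smul, smul_eq_mul] using h2
    have hle : ∀ j, lamk j * c (x j) ≤ lamk j * (ρ - 2*ε) := by
      intro j
      by_cases hj : lamk j = 0
      · simp [hj]
      · have hjge : n ≤ j := by
          by_contra hjn
          push_neg at hjn
          exact hj (hlsupp j (lt_of_lt_of_le hjn hkn))
        exact mul_le_mul_of_nonneg_left (hcontra j hjge) (hl0 j)
    have hub : HasSum (fun j => lamk j * (ρ - 2*ε)) (ρ - 2*ε) := by
      have h2 := hlsum.hasSum.mul_right (ρ - 2*ε)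
      rwa [hl1, one_mul] at h2
    have hY2 : c (Y k) ≤ ρ - 2*ε := hasSum_le hle hmap hub
    linarith
  have hbdd : IsBoundedUnder (· ≤ ·) atTop (fun j => c (x j)) := by
    refine isBoundedUnder_of ⟨‖c‖ * K, fun j => ?_⟩
    calc c (x j) ≤ |c (x j)| := le_abs_self _
      _ = ‖c (x j)‖ := (Real.norm_eq_abs _).symm
      _ ≤ ‖c‖ * ‖x j‖ := c.le_opNorm (x j)
      _ ≤ ‖c‖ * K := mul_le_mul_of_nonneg_left (hK j) (norm_nonneg c)
  have hfreq : ∃ᶠ j in atTop, ρ - 2*ε ≤ c (x j) :=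
    frequently_atTop.2 fun n => (hfreqX n).imp fun j hj => ⟨hj.1, hj.2.le⟩
  have hlim : ρ - 2*ε ≤ limsup (fun j => c (x j)) atTop :=
    le_limsup_of_frequently_le hfreq hbdd
  exact ⟨z, Wset_subset_coSigmaP x 0 hzW, ρ, hρ, c, hcC, hlim⟩

end SimonsAux

open SimonsAux in
/-- (ii) ⇒ (iii) of the equivalence between one-side (I)-generation and Simons' inequality:
if for every bounded sequence `(xₙ)` in `L_D` the sup over `B` of `limsupₙ ⟨xₙ, ·⟩` equals
the sup over `C`, then for every bounded sequence `(xₙ)` in `L_D` the sup over `B` of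
`limsupₙ ⟨xₙ, ·⟩` dominates `inf{sup(x, C) : x ∈ co_{σp}{xₙ}}`. -/
theorem sup_limsup_implies_simons_inequality
    {E : Type*} [NormedAddCommGroup E] [NormedSpace ℝ E] [CompleteSpace E]
    (D : Set (StrongDual ℝ E)) (hDne : D.Nonempty)
    (hDcpt : IsCompact (StrongDual.toWeakDual '' D)) (hDconv : Convex ℝ D)
    (hD0 : (0 : StrongDual ℝ E) ∉ D)
    (C : Set (StrongDual ℝ E))
    (hCcl : IsClosed (StrongDual.toWeakDual '' C)) (hCconv : Convex ℝ C)
    (hfin : ∀ x ∈ LD D, ∃ r : ℝ, IsLUB ((fun c : StrongDual ℝ E => c x) '' C) r)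
    (B : Set (StrongDual ℝ E)) (hBC : B ⊆ C)
    (hsl : ∀ x : ℕ → E, (∀ n, x n ∈ LD D) → Bornology.IsBounded (Set.range x) →
      (⨆ b ∈ B, ((Filter.limsup (fun n => b (x n)) atTop : ℝ) : EReal)) =
        ⨆ c ∈ C, ((Filter.limsup (fun n => c (x n)) atTop : ℝ) : EReal)) :
    ∀ x : ℕ → E, (∀ n, x n ∈ LD D) → Bornology.IsBounded (Set.range x) →
      (⨅ y ∈ coSigmaP x, ⨆ c ∈ C, ((c y : ℝ) : EReal)) ≤
        ⨆ b ∈ B, ((Filter.limsup (fun n => b (x n)) atTop : ℝ) : EReal) := by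
  intro x hx hxb
  have hx0co : x 0 ∈ coSigmaP x := Wset_subset_coSigmaP x 0 (single_mem_Wset x le_rfl)
  rcases C.eq_empty_or_nonempty with hC | hCne
  · calc (⨅ y ∈ coSigmaP x, ⨆ c ∈ C, ((c y : ℝ) : EReal))
        ≤ ⨆ c ∈ C, ((c (x 0) : ℝ) : EReal) := iInf₂_le _ hx0co
      _ = ⊥ := by rw [hC]; simp
      _ ≤ _ := bot_le
  · obtain ⟨K, hK⟩ := (isBounded_iff_forall_norm_le).1 hxb
    have hK' : ∀ i, ‖x i‖ ≤ K := fun i => hK _ (Set.mem_range_self i)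
    rw [hsl x hx hxb]
    by_contra hcon
    rw [not_le] at hcon
    obtain ⟨m, hm1, hm2⟩ := EReal.exists_between_coe_real hcon
    obtain ⟨m', hm'1, hm'2⟩ := EReal.exists_between_coe_real hm1
    have hmm' : m' < m := by exact_mod_cast hm'2
    have hεpos : 0 < (m - m') / 4 := by linarith
    obtain ⟨z, hzco, ρ, hρ, c, hcC, hls⟩ :=
      key hDcpt hCcl hfin hCne hx hK' hεpos
    have h1 : (⨅ y ∈ coSigmaP x, ⨆ c' ∈ C, ((c' y : ℝ) : EReal)) ≤ ((ρ : ℝ) : EReal) := by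
      refine le_trans (iInf₂_le _ hzco) ?_
      exact iSup₂_le fun c' hc' => EReal.coe_le_coe_iff.2 (hρ.1 ⟨c', hc', rfl⟩)
    have h2 : ((ρ - 2*((m - m')/4) : ℝ) : EReal) ≤
        ⨆ c' ∈ C, ((Filter.limsup (fun n => c' (x n)) atTop : ℝ) : EReal) := by
      refine le_trans (EReal.coe_le_coe_iff.2 hls) ?_
      exact le_iSup₂_of_le c hcC le_rfl
    have hmρ : m < ρ := by
      have := lt_of_lt_of_le hm2 h1
      exact_mod_cast this
    have hρm' : ρ - 2*((m - m')/4) < m' := by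
      have := lt_of_le_of_lt h2 hm'1
      exact_mod_cast this
    linarith
end

section
/- Let E be a real Banach space, D ⊆ E* a nonempty weak*-compact convex set with 0 ∉ D, C ⊆ E* a weak*-closed convex set such that every x ∈ L_D has finite supremum on C, and B ⊆ C. Suppose that for every bounded sequence (x_n) in L_D one has sup_{b* ∈ B} (limsup_n ⟨x_n,b*⟩) ≥ inf{ sup_{c* ∈ C} ⟨c*,x⟩ : x ∈ co_{σp}{x_n : n ≥ 1} }. Then for every covering B ⊆ ∪_{n=1}^∞ K_n by an increasing sequence of weak*-compact convex subsets K_n ⊆ C, one has C ⊆ norm-closure(∪_{n=1}^∞ K_n + Λ_D). -/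
open Filter Topology Pointwise

section Aux

variable {E : Type*} [NormedAddCommGroup E] [NormedSpace ℝ E]

open Metric Set NormedSpace

noncomputable instance : LocallyConvexSpace ℝ (WeakDual ℝ E) :=
  WeakBilin.locallyConvexSpace (B := topDualPairing ℝ E)

/-- evaluation at a point as a linear functional on the weak dual -/
noncomputable def evalW (y : E) : WeakDual ℝ E →ₗ[ℝ] ℝ :=
  (NormedSpace.inclusionInDoubleDual ℝ E y).toLinearMap ∘ₗ WeakDual.toStrongDual.toLinearMap

@[simp] theorem evalW_apply (y : E) (g : WeakDual ℝ E) : evalW y g = g y := rfl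

theorem weakdual_clm_eval (f : WeakDual ℝ E →L[ℝ] ℝ) :
    ∃ x : E, ∀ g : WeakDual ℝ E, f g = g x := by
  have hU : f ⁻¹' Metric.ball (0:ℝ) 1 ∈ 𝓝 (0 : WeakDual ℝ E) := by
    apply f.continuous.continuousAt.preimage_mem_nhds
    simp [Metric.ball_mem_nhds]
  obtain ⟨U, hUb, hsub⟩ :=
    ((topDualPairing ℝ E).hasBasis_weakBilin.mem_iff).1 hU
  obtain ⟨s, r, hr, rfl⟩ := (SeminormFamily.basisSets_iff _).1 hUb
  have hker : (⨅ i : {a // a ∈ s}, LinearMap.ker (evalW (i : E))) ≤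
      LinearMap.ker (f : WeakDual ℝ E →ₗ[ℝ] ℝ) := by
    intro g hg
    simp only [Submodule.mem_iInf, LinearMap.mem_ker, evalW_apply] at hg
    have hball : ∀ t : ℝ, (t • g) ∈ (s.sup ((topDualPairing ℝ E).toSeminormFamily)).ball 0 r := by
      intro t
      refine (Seminorm.mem_ball_zero (p := s.sup ((topDualPairing ℝ E).toSeminormFamily)) (y := (show StrongDual ℝ E from t • g))).2 ?_
      rcases s.eq_empty_or_nonempty with rfl | hs
      · exact hr
      apply Seminorm.finset_sup_apply_lt hr
      intro i hi
      have hgi : g i = 0 := hg ⟨i, hi⟩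
      show ‖t * g i‖ < r
      rw [hgi, mul_zero, norm_zero]
      exact hr
    have habs : ∀ t : ℝ, 0 < t → |f g| ≤ 1 / t := by
      intro t ht
      have := hsub (hball t)
      change f (t • g) ∈ Metric.ball (0:ℝ) 1 at this
      simp only [Set.mem_preimage, Metric.mem_ball, dist_zero_right, Real.norm_eq_abs,
        map_smul, smul_eq_mul, abs_mul, abs_of_pos ht] at this
      rw [le_div_iff₀ ht, mul_comm]
      exact this.le
    have : |f g| ≤ 0 := by
      by_contra h
      push_neg at h
      have := habs (2 / |f g|) (by positivity)
      rw [one_div, inv_div] at this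
      nlinarith [abs_nonneg (f g)]
    simpa [LinearMap.mem_ker] using abs_nonpos_iff.mp this
  have hmem := mem_span_of_iInf_ker_le_ker hker
  obtain ⟨c, hc⟩ := (Submodule.mem_span_range_iff_exists_fun ℝ).1 hmem
  refine ⟨∑ i : {a // a ∈ s}, c i • (i : E), fun g => ?_⟩
  have h1 : f g = (∑ i : {a // a ∈ s}, c i • evalW (i : E)) g := by rw [hc]; rfl
  rw [h1]
  simp [LinearMap.sum_apply, LinearMap.smul_apply, evalW_apply, map_sum, map_smul]

theorem mem_image_toWeakDual {S : Set (StrongDual ℝ E)} {w : WeakDual ℝ E} :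
    w ∈ StrongDual.toWeakDual '' S ↔ WeakDual.toStrongDual w ∈ S := by
  constructor
  · rintro ⟨s, hs, rfl⟩
    simpa using hs
  · intro h
    exact ⟨WeakDual.toStrongDual w, h, by simp⟩

theorem convex_image_toWeakDual {S : Set (StrongDual ℝ E)} (h : Convex ℝ S) :
    Convex ℝ (StrongDual.toWeakDual '' S) := by
  simpa using h.linear_image (StrongDual.toWeakDual (𝕜 := ℝ) (E := E)).toLinearMap

theorem lambdaD_mem_rep {D : Set (StrongDual ℝ E)} (hDne : D.Nonempty)
    {z : StrongDual ℝ E} (hz : z ∈ LambdaD D) :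
    ∃ l : ℝ, 0 ≤ l ∧ ∃ d ∈ D, z = l • d := by
  rcases hz with hz | ⟨l, hl, d, hd, rfl⟩
  · obtain ⟨d, hd⟩ := hDne
    exact ⟨0, le_rfl, d, hd, by simp [Set.mem_singleton_iff.1 hz]⟩
  · exact ⟨l, hl.le, d, hd, rfl⟩

theorem lambdaD_convex {D : Set (StrongDual ℝ E)} (hDne : D.Nonempty)
    (hDconv : Convex ℝ D) : Convex ℝ (LambdaD D) := by
  intro z₁ hz₁ z₂ hz₂ p q hp hq hpq
  obtain ⟨l₁, hl₁, d₁, hd₁, rfl⟩ := lambdaD_mem_rep hDne hz₁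
  obtain ⟨l₂, hl₂, d₂, hd₂, rfl⟩ := lambdaD_mem_rep hDne hz₂
  set t := p * l₁ + q * l₂ with ht
  have ht0 : 0 ≤ t := by positivity
  rcases eq_or_lt_of_le ht0 with h0 | hpos
  · left
    have h1 : p * l₁ = 0 := by nlinarith
    have h2 : q * l₂ = 0 := by nlinarith
    simp [smul_smul, h1, h2]
  · right
    refine ⟨t, hpos, (p * l₁ / t) • d₁ + (q * l₂ / t) • d₂, ?_, ?_⟩
    · apply hDconv hd₁ hd₂ (by positivity) (by positivity)
      field_simp
      exact ht.symm
    · rw [smul_add, smul_smul, smul_smul, smul_smul, smul_smul]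
      rw [mul_div_cancel₀ _ hpos.ne', mul_div_cancel₀ _ hpos.ne']


theorem exists_unit_ld {D : Set (StrongDual ℝ E)} (hDne : D.Nonempty)
    (hDcpt : IsCompact (StrongDual.toWeakDual '' D)) (hDconv : Convex ℝ D)
    (hD0 : (0 : StrongDual ℝ E) ∉ D) :
    ∃ (x₀ : E) (r₀ : ℝ), ‖x₀‖ = 1 ∧ r₀ < 0 ∧ ∀ d ∈ D, d x₀ ≤ r₀ := by
  have h0 : (0 : WeakDual ℝ E) ∉ StrongDual.toWeakDual '' D := by
    rw [mem_image_toWeakDual]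
    simpa using hD0
  obtain ⟨f, u, hfu, hu0⟩ := geometric_hahn_banach_closed_point
    (convex_image_toWeakDual hDconv) hDcpt.isClosed h0
  rw [map_zero] at hu0
  obtain ⟨x, hx⟩ := weakdual_clm_eval f
  have hxD : ∀ d ∈ D, d x < u := by
    intro d hd
    have := hfu (StrongDual.toWeakDual d) (Set.mem_image_of_mem _ hd)
    rwa [hx] at this
  obtain ⟨d, hd⟩ := hDne
  have hxne : x ≠ 0 := by
    intro h
    have := hxD d hd
    rw [h, map_zero] at this
    linarith
  have hnx : (0:ℝ) < ‖x‖ := norm_pos_iff.2 hxne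
  refine ⟨‖x‖⁻¹ • x, u / ‖x‖, norm_smul_inv_norm hxne, div_neg_of_neg_of_pos hu0 hnx, ?_⟩
  intro d' hd'
  rw [map_smul, smul_eq_mul, div_eq_inv_mul]
  exact mul_le_mul_of_nonneg_left (hxD d' hd').le (by positivity)

theorem lambdaD_image_isClosed {D : Set (StrongDual ℝ E)} (hDne : D.Nonempty)
    (hDcpt : IsCompact (StrongDual.toWeakDual '' D)) {x₀ : E} {r₀ : ℝ} (hr₀ : r₀ < 0)
    (hx₀ : ∀ d ∈ D, d x₀ ≤ r₀) :
    IsClosed (StrongDual.toWeakDual '' LambdaD D) := by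
  set Lam := StrongDual.toWeakDual '' LambdaD D with hLam
  rw [← closure_subset_iff_isClosed]
  intro z hz
  set M := max ((z x₀ - 1) / r₀) 1 with hM
  set K := (fun p : ℝ × WeakDual ℝ E => p.1 • p.2) ''
    (Set.Icc (0:ℝ) M ×ˢ (StrongDual.toWeakDual '' D)) with hK
  have hKcpt : IsCompact K := (isCompact_Icc.prod hDcpt).image continuous_smul
  set V := {w : WeakDual ℝ E | z x₀ - 1 < w x₀} with hV
  have hVopen : IsOpen V := isOpen_Ioi.preimage (WeakDual.eval_continuous x₀)
  have hzV : z ∈ V := by simp [hV]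
  have hsub : Lam ∩ V ⊆ K := by
    rintro w ⟨hwΛ, hwV⟩
    rw [mem_image_toWeakDual] at hwΛ
    obtain ⟨l, hl, d, hd, hrep⟩ := lambdaD_mem_rep hDne hwΛ
    have hwx : w x₀ = l * d x₀ := by
      have : WeakDual.toStrongDual w x₀ = l * d x₀ := by rw [hrep]; simp
      exact this
    have hlr : l * r₀ > z x₀ - 1 := by
      have h1 : l * d x₀ ≤ l * r₀ := mul_le_mul_of_nonneg_left (hx₀ d hd) hl
      have h2 : z x₀ - 1 < w x₀ := hwV
      rw [hwx] at h2
      linarith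
    have hlM : l ≤ M := by
      have : l < (z x₀ - 1) / r₀ := by
        rw [lt_div_iff_of_neg hr₀]
        linarith
      exact le_trans this.le (le_max_left _ _)
    refine ⟨(l, StrongDual.toWeakDual d), ⟨⟨hl, hlM⟩, Set.mem_image_of_mem _ hd⟩, ?_⟩
    show l • StrongDual.toWeakDual d = w
    rw [← map_smul, ← hrep]
    have : StrongDual.toWeakDual (WeakDual.toStrongDual w) = w := by
      simp
    rw [this]
  have hzK : z ∈ K := by
    apply hKcpt.isClosed.closure_subset
    apply closure_mono hsub
    rw [mem_closure_iff_nhds] at hz ⊢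
    intro U hU
    obtain ⟨w, hw⟩ := hz (U ∩ V) (Filter.inter_mem hU (hVopen.mem_nhds hzV))
    exact ⟨w, ⟨hw.1.1, hw.2, hw.1.2⟩⟩
  obtain ⟨⟨l, w⟩, ⟨⟨hl0, _⟩, hwD⟩, hrep⟩ := hzK
  rw [mem_image_toWeakDual] at hwD ⊢
  have : WeakDual.toStrongDual z = l • WeakDual.toStrongDual w := by
    rw [← hrep]; simp
  rw [this]
  rcases eq_or_lt_of_le hl0 with h0 | hpos
  · left
    rw [Set.mem_singleton_iff, show l = 0 from h0.symm, zero_smul]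
  · exact Or.inr ⟨l, hpos, _, hwD, rfl⟩


theorem sep_step {D : Set (StrongDual ℝ E)} (hDne : D.Nonempty)
    (hDcpt : IsCompact (StrongDual.toWeakDual '' D)) (hDconv : Convex ℝ D)
    {x₀ : E} {r₀ : ℝ} (hr₀ : r₀ < 0) (hx₀ : ∀ d ∈ D, d x₀ ≤ r₀)
    {Kn : Set (StrongDual ℝ E)} (hne : Kn.Nonempty)
    (hKcpt : IsCompact (StrongDual.toWeakDual '' Kn)) (hKconv : Convex ℝ Kn)
    {c₀ : StrongDual ℝ E} {ε : ℝ} (hε : 0 < ε)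
    (hdist : ∀ k ∈ Kn, ∀ l ∈ LambdaD D, ε ≤ dist c₀ (k + l)) :
    ∃ x : E, ‖x‖ ≤ 1 ∧ (∀ d ∈ D, d x ≤ 0) ∧ ∀ k ∈ Kn, k x + ε/2 ≤ c₀ x := by
  classical
  obtain ⟨k₀, hk₀⟩ := hne
  set A : Set (WeakDual ℝ E) :=
    (StrongDual.toWeakDual '' Kn) + (StrongDual.toWeakDual '' LambdaD D) with hA
  have hAconv : Convex ℝ A :=
    (convex_image_toWeakDual hKconv).add
      (convex_image_toWeakDual (lambdaD_convex hDne hDconv))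
  have hAcl : IsClosed A :=
    IsClosed.add_left_of_isCompact (lambdaD_image_isClosed hDne hDcpt hr₀ hx₀) hKcpt
  set ballW : Set (WeakDual ℝ E) :=
    WeakDual.toStrongDual ⁻¹' Metric.closedBall c₀ (ε/2) with hballW
  have hBcpt : IsCompact ballW := WeakDual.isCompact_closedBall c₀ (ε/2)
  have hBconv : Convex ℝ ballW := by
    simpa using (convex_closedBall c₀ (ε/2)).linear_preimage
      (WeakDual.toStrongDual (𝕜 := ℝ) (E := E)).toLinearMap
  have disj : Disjoint A ballW := by
    rw [Set.disjoint_left]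
    rintro w ⟨k', hk', l', hl', rfl⟩ hwball
    rw [mem_image_toWeakDual] at hk' hl'
    have h1 : ε ≤ dist c₀ (WeakDual.toStrongDual k' + WeakDual.toStrongDual l') :=
      hdist _ hk' _ hl'
    have h2 : WeakDual.toStrongDual (k' + l') ∈ Metric.closedBall c₀ (ε/2) := hwball
    rw [map_add, Metric.mem_closedBall, dist_comm] at h2
    linarith
  obtain ⟨f, u, v, hfA, huv, hfB⟩ :=
    geometric_hahn_banach_closed_compact hAconv hAcl hBconv hBcpt disj
  obtain ⟨x, hx⟩ := weakdual_clm_eval f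
  have hKl : ∀ k ∈ Kn, ∀ l ∈ LambdaD D, k x + l x < u := by
    intro k hk l hl
    have hmem : StrongDual.toWeakDual k + StrongDual.toWeakDual l ∈ A :=
      Set.add_mem_add (Set.mem_image_of_mem _ hk) (Set.mem_image_of_mem _ hl)
    have h2 := hfA _ hmem
    rw [map_add, hx, hx] at h2
    exact h2
  have hKu : ∀ k ∈ Kn, k x < u := by
    intro k hk
    have := hKl k hk 0 (Or.inl rfl)
    simpa using this
  have hDx : ∀ d ∈ D, d x ≤ 0 := by
    intro d hd
    by_contra h
    push_neg at h
    have ht : 0 < (u - k₀ x) / (d x) + 1 := by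
      have : 0 < (u - k₀ x) / (d x) := div_pos (by linarith [hKu k₀ hk₀]) h
      linarith
    have h2 := hKl k₀ hk₀ (((u - k₀ x) / (d x) + 1) • d)
      (Or.inr ⟨(u - k₀ x) / (d x) + 1, ht, d, hd, rfl⟩)
    have h3 : ((((u - k₀ x) / (d x) + 1)) • d) x = ((u - k₀ x) / (d x) + 1) * d x := rfl
    rw [h3] at h2
    have h4 : ((u - k₀ x) / (d x) + 1) * d x = (u - k₀ x) + d x := by
      field_simp
    rw [h4] at h2
    linarith
  have hc₀ball : StrongDual.toWeakDual c₀ ∈ ballW := by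
    show c₀ ∈ Metric.closedBall c₀ (ε/2)
    exact Metric.mem_closedBall_self (by positivity)
  have hxne : x ≠ 0 := by
    intro h
    have h1 := hKu k₀ hk₀
    have h2 := hfB _ hc₀ball
    rw [hx] at h2
    rw [h] at h1 h2
    rw [map_zero] at h1
    rw [map_zero] at h2
    linarith
  have hnx : (0:ℝ) < ‖x‖ := norm_pos_iff.2 hxne
  obtain ⟨gd, hgd1, hgdx⟩ := exists_dual_vector ℝ x (norm_ne_zero_iff.2 hxne)
  have hgdx' : gd x = ‖x‖ := by exact_mod_cast hgdx
  have hballx : v < c₀ x - ε/2 * ‖x‖ := by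
    have hwball : StrongDual.toWeakDual (c₀ - (ε/2) • gd) ∈ ballW := by
      show c₀ - (ε/2) • gd ∈ Metric.closedBall c₀ (ε/2)
      rw [Metric.mem_closedBall, dist_eq_norm]
      have : c₀ - (ε/2) • gd - c₀ = -((ε/2) • gd) := by abel
      rw [this, norm_neg, norm_smul, Real.norm_eq_abs, abs_of_pos (by positivity), hgd1,
        mul_one]
    have h2 := hfB _ hwball
    rw [hx] at h2
    have h3 : (StrongDual.toWeakDual (c₀ - (ε/2) • gd)) x
        = c₀ x - (ε/2) * gd x := rfl
    rw [h3, hgdx'] at h2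
    exact h2
  refine ⟨‖x‖⁻¹ • x, le_of_eq (norm_smul_inv_norm hxne), ?_, ?_⟩
  · intro d hd
    rw [map_smul, smul_eq_mul]
    exact mul_nonpos_of_nonneg_of_nonpos (by positivity) (hDx d hd)
  · intro k hk
    have hk2 : k x + ε/2 * ‖x‖ ≤ c₀ x := by
      linarith [hKu k hk]
    rw [map_smul, map_smul, smul_eq_mul, smul_eq_mul]
    have h4 := mul_le_mul_of_nonneg_left hk2 (le_of_lt (inv_pos.2 hnx))
    rw [mul_add] at h4
    have h3 : ‖x‖⁻¹ * (ε/2 * ‖x‖) = ε/2 := by field_simp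
    rw [h3] at h4
    exact h4

end Aux

/-- (iii) ⇒ (i) of the equivalence between one-side (I)-generation and Simons' inequality:
if for every bounded sequence `(xₙ)` in `L_D` the sup over `B` of `limsupₙ ⟨xₙ, ·⟩`
dominates `inf{sup(x, C) : x ∈ co_{σp}{xₙ}}`, then for every covering of `B` by an
increasing sequence of weak*-compact convex subsets `Kₙ ⊆ C` one has
`C ⊆ norm-closure(⋃ₙ Kₙ + Λ_D)`. -/
theorem simons_inequality_implies_one_side_I_generation
    {E : Type*} [NormedAddCommGroup E] [NormedSpace ℝ E] [CompleteSpace E]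
    (D : Set (StrongDual ℝ E)) (hDne : D.Nonempty)
    (hDcpt : IsCompact (StrongDual.toWeakDual '' D)) (hDconv : Convex ℝ D)
    (hD0 : (0 : StrongDual ℝ E) ∉ D)
    (C : Set (StrongDual ℝ E))
    (hCcl : IsClosed (StrongDual.toWeakDual '' C)) (hCconv : Convex ℝ C)
    (hfin : ∀ x ∈ LD D, ∃ r : ℝ, IsLUB ((fun c : StrongDual ℝ E => c x) '' C) r)
    (B : Set (StrongDual ℝ E)) (hBC : B ⊆ C)
    (hsimons : ∀ x : ℕ → E, (∀ n, x n ∈ LD D) → Bornology.IsBounded (Set.range x) →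
      (⨅ y ∈ coSigmaP x, ⨆ c ∈ C, ((c y : ℝ) : EReal)) ≤
        ⨆ b ∈ B, ((Filter.limsup (fun n => b (x n)) atTop : ℝ) : EReal)) :
    ∀ K : ℕ → Set (StrongDual ℝ E), Monotone K →
      (∀ n, IsCompact (StrongDual.toWeakDual '' K n)) →
      (∀ n, Convex ℝ (K n)) → (∀ n, K n ⊆ C) → B ⊆ ⋃ n, K n →
      C ⊆ closure ((⋃ n, K n) + LambdaD D) := by
  intro K hKmono hKcpt hKconv hKC hBK c₀ hc₀C
  by_contra hc₀
  rw [Metric.mem_closure_iff] at hc₀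
  push_neg at hc₀
  obtain ⟨ε, hε, hdist⟩ := hc₀
  obtain ⟨x₀, r₀, hx₀n, hr₀, hx₀⟩ := exists_unit_ld hDne hDcpt hDconv hD0
  have hx₀LD : x₀ ∈ LD D := ⟨r₀, hr₀, hx₀⟩
  obtain ⟨M, hM⟩ := hfin x₀ hx₀LD
  set M₀ := max M 0 with hM₀def
  have hM₀ : (0:ℝ) ≤ M₀ := le_max_right _ _
  have hMub : ∀ c ∈ C, c x₀ ≤ M₀ := fun c hc =>
    le_trans (hM.1 (Set.mem_image_of_mem _ hc)) (le_max_left _ _)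
  have claim : ∀ n, ∃ x : E, ‖x‖ ≤ 1 ∧ (∀ d ∈ D, d x ≤ 0) ∧
      ∀ k ∈ K n, k x + ε/2 ≤ c₀ x := by
    intro n
    rcases (K n).eq_empty_or_nonempty with hKe | hKne
    · exact ⟨x₀, le_of_eq hx₀n, fun d hd => le_trans (hx₀ d hd) hr₀.le, by simp [hKe]⟩
    · apply sep_step hDne hDcpt hDconv hr₀ hx₀ hKne (hKcpt n) (hKconv n) hε
      intro k hk l hl
      exact hdist (k + l) (Set.add_mem_add (Set.mem_iUnion.2 ⟨n, hk⟩) hl)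
  choose xs hxs1 hxs2 hxs3 using claim
  set Q := M₀ + ‖c₀‖ + 1 with hQdef
  have hQ : (0:ℝ) < Q := by positivity
  set δ := min (ε/(8*Q)) 1 with hδdef
  have hδpos : 0 < δ := lt_min (by positivity) one_pos
  have hδ1 : δ ≤ 1 := min_le_right _ _
  have hδQ : δ * (‖c₀‖ + M₀) ≤ ε/8 := by
    have h1 : δ ≤ ε/(8*Q) := min_le_left _ _
    calc δ * (‖c₀‖ + M₀) ≤ (ε/(8*Q)) * Q :=
          mul_le_mul h1 (by rw [hQdef]; linarith) (by positivity) (by positivity)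
      _ = ε/8 := by field_simp
  set y := fun n => xs n + δ • x₀ with hydef
  have hyapp : ∀ (n : ℕ) (g : StrongDual ℝ E), g (y n) = g (xs n) + δ * g x₀ := by
    intro n g
    rw [hydef]
    simp [map_add, map_smul, smul_eq_mul]
  have hyLD : ∀ n, y n ∈ LD D := by
    intro n
    refine ⟨δ * r₀, by nlinarith, fun d hd => ?_⟩
    rw [hyapp]
    nlinarith [hxs2 n d hd, hx₀ d hd, hδpos.le]
  have hynorm : ∀ n, ‖y n‖ ≤ 2 := by
    intro n
    calc ‖y n‖ ≤ ‖xs n‖ + ‖δ • x₀‖ := norm_add_le _ _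
      _ ≤ 1 + 1 := by
          apply add_le_add (hxs1 n)
          rw [norm_smul, Real.norm_eq_abs, abs_of_pos hδpos, hx₀n, mul_one]
          exact hδ1
      _ = 2 := by norm_num
  have hygap : ∀ n, ∀ k ∈ K n, k (y n) + ε/4 ≤ c₀ (y n) := by
    intro n k hk
    have h1 : k (xs n) + ε/2 ≤ c₀ (xs n) := hxs3 n k hk
    have h2 : k x₀ ≤ M₀ := hMub k (hKC n hk)
    have h3 : -‖c₀‖ ≤ c₀ x₀ := by
      have h4 := c₀.le_opNorm x₀
      rw [hx₀n, mul_one, Real.norm_eq_abs] at h4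
      linarith [(abs_le.1 h4).1]
    rw [hyapp, hyapp]
    nlinarith [mul_le_mul_of_nonneg_left h2 hδpos.le,
      mul_le_mul_of_nonneg_left h3 hδpos.le]
  have hab : ∀ n, c₀ (y n) ∈ Metric.closedBall (0:ℝ) (2*‖c₀‖+1) := by
    intro n
    rw [mem_closedBall_zero_iff, Real.norm_eq_abs]
    have h4 := c₀.le_opNorm (y n)
    have h5 : ‖c₀‖ * ‖y n‖ ≤ ‖c₀‖ * 2 := mul_le_mul_of_nonneg_left (hynorm n) (norm_nonneg _)
    rw [Real.norm_eq_abs] at h4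
    nlinarith [norm_nonneg c₀]
  obtain ⟨L, -, φ, hφ, hφt⟩ :=
    tendsto_subseq_of_bounded Metric.isBounded_closedBall hab
  obtain ⟨N, hN⟩ := Metric.tendsto_atTop.1 hφt (ε/16) (by positivity)
  set ψ := fun n => φ (n + N) with hψdef
  have hψmono : StrictMono ψ := fun m n h => hφ (by omega)
  have hψge : ∀ n, n ≤ ψ n := fun n =>
    le_trans (Nat.le_add_right n N) hφ.le_apply
  set z := fun n => y (ψ n) with hzdef
  have haψ : ∀ n, |c₀ (z n) - L| < ε/16 := by
    intro n
    have := hN (n + N) (Nat.le_add_left N n)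
    rw [Real.dist_eq] at this
    exact this
  have hz1 : ∀ n, z n ∈ LD D := fun n => hyLD (ψ n)
  have hz2 : Bornology.IsBounded (Set.range z) := by
    apply (Metric.isBounded_closedBall (x := (0:E)) (r := 2)).subset
    rintro _ ⟨n, rfl⟩
    exact mem_closedBall_zero_iff.2 (hynorm (ψ n))
  have key := hsimons z hz1 hz2
  have hlow : ((L - ε/16 : ℝ) : EReal) ≤ ⨅ w ∈ coSigmaP z, ⨆ c ∈ C, ((c w : ℝ) : EReal) := by
    refine le_iInf₂ fun w hw => ?_
    obtain ⟨lam, hlam0, hlam1, hlamsum⟩ := hw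
    have hcw : (L - ε/16 : ℝ) ≤ c₀ w := by
      have h1 : Filter.Tendsto (fun n => c₀ (∑ i ∈ Finset.range n, lam i • z i))
          atTop (𝓝 (c₀ w)) := (c₀.continuous.tendsto w).comp hlamsum
      have h2 : Filter.Tendsto (fun n => (∑ i ∈ Finset.range n, lam i) * (L - ε/16))
          atTop (𝓝 (1 * (L - ε/16))) := hlam1.mul_const _
      have h3 : ∀ n, (∑ i ∈ Finset.range n, lam i) * (L - ε/16) ≤
          c₀ (∑ i ∈ Finset.range n, lam i • z i) := by
        intro n
        rw [map_sum, Finset.sum_mul]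
        apply Finset.sum_le_sum
        intro i _
        rw [map_smul, smul_eq_mul]
        apply mul_le_mul_of_nonneg_left _ (hlam0 i)
        linarith [(abs_lt.1 (haψ i)).1]
      have h5 := le_of_tendsto_of_tendsto' h2 h1 h3
      rwa [one_mul] at h5
    calc ((L - ε/16 : ℝ) : EReal) ≤ ((c₀ w : ℝ) : EReal) := EReal.coe_le_coe_iff.2 hcw
      _ ≤ ⨆ c ∈ C, ((c w : ℝ) : EReal) := le_iSup₂_of_le c₀ hc₀C le_rfl
  have hup : (⨆ b ∈ B, ((Filter.limsup (fun n => b (z n)) atTop : ℝ) : EReal)) ≤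
      ((L - ε/8 : ℝ) : EReal) := by
    refine iSup₂_le fun b hb => ?_
    obtain ⟨m, hbm⟩ := Set.mem_iUnion.1 (hBK hb)
    rw [EReal.coe_le_coe_iff]
    have hbound : ∀ n : ℕ, -(‖b‖ * 2) ≤ b (z n) := by
      intro n
      have h4 := b.le_opNorm (z n)
      have h5 : ‖b‖ * ‖z n‖ ≤ ‖b‖ * 2 := mul_le_mul_of_nonneg_left (hynorm (ψ n)) (norm_nonneg _)
      rw [Real.norm_eq_abs] at h4
      have := (abs_le.1 (h4.trans h5)).1
      linarith
    have hcb : Filter.IsCoboundedUnder (· ≤ ·) atTop (fun n => b (z n)) :=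
      Filter.isCoboundedUnder_le_of_le atTop (fun n => hbound n)
    apply Filter.limsup_le_of_le hcb
    filter_upwards [Filter.eventually_ge_atTop m] with n hn
    have hbK : b ∈ K (ψ n) := hKmono (le_trans hn (hψge n)) hbm
    have h6 := hygap (ψ n) b hbK
    have h7 := (abs_lt.1 (haψ n)).2
    have h8 : b (z n) + ε/4 ≤ c₀ (z n) := h6
    linarith
  have hfinal := le_trans hlow (le_trans key hup)
  rw [EReal.coe_le_coe_iff] at hfinal
  linarith
end

section
/- Let E be a real Banach space, D ⊆ E* a nonempty weak*-compact convex set with 0 ∉ D, and C ⊆ E* a weak*-closed convex set such that every y ∈ L_D has finite supremum on C. Then every x ∈ L_D attains its supremum on C, i.e. there exists c* ∈ C with ⟨x,c*⟩ = sup{⟨x,z*⟩ : z* ∈ C}. -/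
open Filter Topology

/-- If `D ⊆ E*` is a nonempty weak*-compact convex set with `0 ∉ D` and `C ⊆ E*` is a
weak*-closed convex set on which every `y ∈ L_D` has finite supremum, then every
`x ∈ L_D` attains its supremum on `C`. -/
theorem lD_attains_supremum
    {E : Type*} [NormedAddCommGroup E] [NormedSpace ℝ E] [CompleteSpace E]
    (D : Set (StrongDual ℝ E)) (hDne : D.Nonempty)
    (hDcpt : IsCompact (StrongDual.toWeakDual '' D)) (hDconv : Convex ℝ D)
    (hD0 : (0 : StrongDual ℝ E) ∉ D)
    (C : Set (StrongDual ℝ E))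
    (hCcl : IsClosed (StrongDual.toWeakDual '' C)) (hCconv : Convex ℝ C)
    (hfin : ∀ y ∈ LD D, ∃ r : ℝ, IsLUB ((fun c : StrongDual ℝ E => c y) '' C) r) :
    ∀ x ∈ LD D, ∃ c₀ ∈ C, IsLUB ((fun c : StrongDual ℝ E => c x) '' C) (c₀ x) := by
  intro x hx
  obtain ⟨r, hr⟩ := hfin x hx
  obtain ⟨s, hs, hsD⟩ := hx
  -- For every direction z, some point x + t • z lies in LD D.
  have hbdd : ∀ z : E, ∃ m : ℝ, ∀ d ∈ D, d z ≤ m := by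
    intro z
    have h1 : IsCompact ((fun w : WeakDual ℝ E => w z) ''
        (StrongDual.toWeakDual '' D)) :=
      hDcpt.image (WeakDual.eval_continuous z)
    obtain ⟨m, hm⟩ := h1.bddAbove
    refine ⟨m, fun d hd => hm ?_⟩
    exact ⟨StrongDual.toWeakDual d, ⟨d, hd, rfl⟩, rfl⟩
  have memLD : ∀ z : E, ∃ t > (0 : ℝ), x + t • z ∈ LD D := by
    intro z
    obtain ⟨m, hm⟩ := hbdd z
    set M : ℝ := max m 0 with hM
    have hM0 : 0 ≤ M := le_max_right _ _
    have htpos : (0:ℝ) < (-s) / (2 * (M + 1)) := div_pos (by linarith) (by linarith)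
    refine ⟨(-s) / (2 * (M + 1)), htpos, s / 2, by linarith, ?_⟩
    intro d hd
    have h1 : d (x + ((-s) / (2 * (M + 1))) • z) = d x + ((-s) / (2 * (M + 1))) * d z := by
      simp [map_add, map_smul, smul_eq_mul]
    rw [h1]
    have h2 : d z ≤ M := le_trans (hm d hd) (le_max_left _ _)
    have h3 : ((-s) / (2 * (M + 1))) * d z ≤ ((-s) / (2 * (M + 1))) * M := by
      apply mul_le_mul_of_nonneg_left h2 htpos.le
    have h4 : ((-s) / (2 * (M + 1))) * M ≤ -s / 2 := by
      rw [div_mul_eq_mul_div, div_le_div_iff₀ (by linarith) (by norm_num)]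
      nlinarith
    have h5 := hsD d hd
    linarith
  -- Pointwise bound on the slice {c ∈ C | r - 1 ≤ c x}.
  have key : ∀ z : E, ∃ B : ℝ, ∀ c ∈ C, r - 1 ≤ c x → |c z| ≤ B := by
    intro z
    obtain ⟨t₁, ht₁, hy₁⟩ := memLD z
    obtain ⟨t₂, ht₂, hy₂⟩ := memLD (-z)
    obtain ⟨r₁, hr₁⟩ := hfin _ hy₁
    obtain ⟨r₂, hr₂⟩ := hfin _ hy₂
    refine ⟨max ((r₁ - (r - 1)) / t₁) ((r₂ - (r - 1)) / t₂), fun c hc hcx => ?_⟩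
    have e₁ : c (x + t₁ • z) ≤ r₁ := hr₁.1 ⟨c, hc, rfl⟩
    have e₂ : c (x + t₂ • (-z)) ≤ r₂ := hr₂.1 ⟨c, hc, rfl⟩
    have e₁' : c x + t₁ * c z ≤ r₁ := by
      have : c (x + t₁ • z) = c x + t₁ * c z := by simp [map_add, map_smul, smul_eq_mul]
      linarith [this ▸ e₁]
    have e₂' : c x - t₂ * c z ≤ r₂ := by
      have : c (x + t₂ • (-z)) = c x - t₂ * c z := by
        simp [map_add, map_smul, smul_eq_mul]; ring
      linarith [this ▸ e₂]
    rw [abs_le]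
    constructor
    · have : -(c z) ≤ (r₂ - (r - 1)) / t₂ := by
        rw [le_div_iff₀ ht₂]; nlinarith
      have h2 : (r₂ - (r - 1)) / t₂ ≤ max ((r₁ - (r - 1)) / t₁) ((r₂ - (r - 1)) / t₂) :=
        le_max_right _ _
      linarith
    · have : c z ≤ (r₁ - (r - 1)) / t₁ := by
        rw [le_div_iff₀ ht₁]; nlinarith
      exact le_trans this (le_max_left _ _)
  -- The slice as a set in the weak dual.
  set K : Set (WeakDual ℝ E) :=
    (StrongDual.toWeakDual '' C) ∩ {w | r - 1 ≤ w x} with hK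
  have hKcl : IsClosed K :=
    hCcl.inter (isClosed_le continuous_const (WeakDual.eval_continuous x))
  have hpre : StrongDual.toWeakDual ⁻¹' K = {c | c ∈ C ∧ r - 1 ≤ c x} := by
    ext c
    simp only [Set.mem_preimage, hK, Set.mem_inter_iff, Set.mem_image, Set.mem_setOf_eq]
    constructor
    · rintro ⟨⟨c', hc', hcc⟩, h2⟩
      have : c' = c := StrongDual.toWeakDual.injective hcc
      exact ⟨this ▸ hc', h2⟩
    · rintro ⟨h1, h2⟩
      exact ⟨⟨c, h1, rfl⟩, h2⟩
  -- Norm boundedness via Banach–Steinhaus.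
  have hKbdd : Bornology.IsBounded (StrongDual.toWeakDual ⁻¹' K) := by
    rw [hpre]
    set ι := {c : StrongDual ℝ E // c ∈ C ∧ r - 1 ≤ c x}
    have hbs : ∀ z : E, ∃ B : ℝ, ∀ i : ι, ‖(i : StrongDual ℝ E) z‖ ≤ B := by
      intro z
      obtain ⟨B, hB⟩ := key z
      exact ⟨B, fun i => by simpa [Real.norm_eq_abs] using hB i i.2.1 i.2.2⟩
    obtain ⟨B', hB'⟩ := banach_steinhaus hbs
    apply Bornology.IsBounded.subset (Metric.isBounded_closedBall (x := 0) (r := B'))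
    rintro c hc
    simpa [Metric.mem_closedBall, dist_zero_right] using hB' ⟨c, hc⟩
  have hKcpt : IsCompact K := WeakDual.isCompact_of_bounded_of_closed hKbdd hKcl
  -- K is nonempty.
  have hKne : K.Nonempty := by
    obtain ⟨b, hb, hb'⟩ := hr.exists_between (sub_one_lt r)
    obtain ⟨c, hc, rfl⟩ := hb
    exact ⟨StrongDual.toWeakDual c, ⟨c, hc, rfl⟩, le_of_lt hb'.1⟩
  -- Maximize evaluation at x on K.
  obtain ⟨w₀, hw₀K, hw₀max⟩ :=
    hKcpt.exists_isMaxOn hKne (WeakDual.eval_continuous x).continuousOn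
  obtain ⟨⟨c₀, hc₀C, hc₀w⟩, hw₀x⟩ := hw₀K
  refine ⟨c₀, hc₀C, ?_⟩
  have hc₀x : (c₀ : StrongDual ℝ E) x = w₀ x := by rw [← hc₀w]; rfl
  have hub : ∀ c ∈ C, c x ≤ c₀ x := by
    intro c hc
    by_cases h : r - 1 ≤ c x
    · have : StrongDual.toWeakDual c ∈ K := ⟨⟨c, hc, rfl⟩, h⟩
      have := hw₀max this
      rw [hc₀x]
      exact this
    · push_neg at h
      rw [hc₀x]
      exact le_trans h.le (le_trans hw₀x le_rfl)
  exact IsGreatest.isLUB ⟨⟨c₀, hc₀C, rfl⟩, by rintro _ ⟨c, hc, rfl⟩; exact hub c hc⟩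
end

section
/- Let E be a real Banach space, D ⊆ E* a nonempty convex weakly compact set with 0 ∉ D, and B ⊆ E* a nonempty set such that some x₀ ∈ L_D has finite supremum on B. Then the norm closure of co(B) + Λ_D is contained in (norm-closed convex hull of B) + Λ_D. -/
open Filter Topology Pointwise

instance WeakSpace.instContinuousSMul' {𝕜 E : Type*} [CommSemiring 𝕜] [TopologicalSpace 𝕜]
    [ContinuousAdd 𝕜] [ContinuousConstSMul 𝕜 𝕜] [ContinuousSMul 𝕜 𝕜]
    [AddCommMonoid E] [Module 𝕜 E] [TopologicalSpace E] :
    ContinuousSMul 𝕜 (WeakSpace 𝕜 E) :=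
  WeakBilin.instContinuousSMul (topDualPairing 𝕜 E).flip

/-- If `D ⊆ E*` is a nonempty convex weakly compact set with `0 ∉ D` and `B ⊆ E*` is a
nonempty set such that some `x₀ ∈ L_D` has finite supremum on `B`, then
`norm-closure(co(B) + Λ_D) ⊆ (norm-closed convex hull of B) + Λ_D`. -/
theorem closure_coneSum_subset
    {E : Type*} [NormedAddCommGroup E] [NormedSpace ℝ E] [CompleteSpace E]
    (D : Set (StrongDual ℝ E)) (hDne : D.Nonempty) (hDconv : Convex ℝ D)
    (hDcpt : IsCompact (toWeakSpace ℝ (StrongDual ℝ E) '' D))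
    (hD0 : (0 : StrongDual ℝ E) ∉ D)
    (B : Set (StrongDual ℝ E)) (hBne : B.Nonempty)
    (hx₀ : ∃ x₀ ∈ LD D, ∃ r : ℝ, ∀ b ∈ B, b x₀ ≤ r) :
    closure (convexHull ℝ B + LambdaD D) ⊆ closure (convexHull ℝ B) + LambdaD D := by
  obtain ⟨x₀, ⟨r₀, hr₀, hDx₀⟩, r, hBr⟩ := hx₀
  intro z hz
  obtain ⟨u, hu_mem, hu_tend⟩ := mem_closure_iff_seq_limit.mp hz
  have hdecomp : ∀ n, ∃ c ∈ convexHull ℝ B, ∃ l : ℝ, 0 ≤ l ∧ ∃ d ∈ D, u n = c + l • d := by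
    intro n
    obtain ⟨cc, hc, v, hv, hcv⟩ := Set.mem_add.mp (hu_mem n)
    rcases hv with hv0 | ⟨l, hlpos, dd, hdd, rfl⟩
    · refine ⟨cc, hc, 0, le_refl 0, hDne.some, hDne.some_mem, ?_⟩
      simp only [Set.mem_singleton_iff] at hv0
      simp [← hcv, hv0]
    · exact ⟨cc, hc, l, hlpos.le, dd, hdd, hcv.symm⟩
  choose c hc l hl d hd hu using hdecomp
  have hcB : ∀ f ∈ convexHull ℝ B, f x₀ ≤ r := fun f hf =>
    convexHull_min hBr (convex_halfSpace_le
      ⟨fun a b => by simp, fun s a => by simp⟩ r) hf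
  have hux₀ : Tendsto (fun n => u n x₀) atTop (𝓝 (z x₀)) :=
    ((ContinuousLinearMap.apply ℝ ℝ x₀).continuous.tendsto z).comp hu_tend
  obtain ⟨m, hm⟩ := hux₀.bddBelow_range
  set M : ℝ := (r - m) / (-r₀) with hM
  have hlM : ∀ n, l n ≤ M := by
    intro n
    have h1 : u n x₀ = c n x₀ + l n * d n x₀ := by rw [hu n]; simp
    have h2 : c n x₀ ≤ r := hcB _ (hc n)
    have h3 : l n * d n x₀ ≤ l n * r₀ := mul_le_mul_of_nonneg_left (hDx₀ _ (hd n)) (hl n)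
    have h4 : m ≤ u n x₀ := hm ⟨n, rfl⟩
    rw [hM, le_div_iff₀ (by linarith)]
    nlinarith
  set T := toWeakSpace ℝ (StrongDual ℝ E) with hT
  set K := (fun p : ℝ × WeakSpace ℝ (StrongDual ℝ E) => p.1 • p.2) ''
      (Set.Icc (0:ℝ) M ×ˢ (T '' D)) with hKdef
  have hK : IsCompact K := (isCompact_Icc.prod hDcpt).image continuous_smul
  have hwK : ∀ n, T (l n • d n) ∈ K := fun n =>
    ⟨(l n, T (d n)), ⟨⟨hl n, hlM n⟩, Set.mem_image_of_mem _ (hd n)⟩, (map_smul T (l n) (d n)).symm⟩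
  let U : Ultrafilter ℕ := Ultrafilter.of atTop
  have hU : (U : Filter ℕ) ≤ atTop := Ultrafilter.of_le _
  have hmapK : (U.map (fun n => T (l n • d n)) : Filter _) ≤ Filter.principal K := by
    refine le_principal_iff.mpr (Filter.mem_map.mpr ?_)
    exact Filter.univ_mem' hwK
  obtain ⟨y, hyK, hy⟩ := hK.ultrafilter_le_nhds _ hmapK
  have hyT : Tendsto (fun n => T (l n • d n)) (U : Filter ℕ) (𝓝 y) := hy
  have htw : Tendsto (fun n => T (u n)) (U : Filter ℕ) (𝓝 (T z)) :=
    (((toWeakSpaceCLM ℝ (StrongDual ℝ E)).continuous.tendsto z).comp hu_tend).mono_left hU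
  have hcw : Tendsto (fun n => T (c n)) (U : Filter ℕ) (𝓝 (T z + (-1 : ℝ) • y)) := by
    have heq : ∀ n, T (c n) = T (u n) + (-1 : ℝ) • T (l n • d n) := by
      intro n
      have : c n = u n + (-1 : ℝ) • (l n • d n) := by
        rw [hu n]; module
      rw [this, map_add, map_smul]
    simp only [heq]
    exact htw.add (hyT.const_smul (-1 : ℝ))
  have hmem : T z + (-1 : ℝ) • y ∈ closure (T '' convexHull ℝ B) :=
    mem_closure_of_tendsto hcw (Filter.Eventually.of_forall fun n =>
      Set.mem_image_of_mem _ (hc n))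
  rw [← (convex_convexHull ℝ B).toWeakSpace_closure ℝ] at hmem
  obtain ⟨cz, hcz, hczeq⟩ := hmem
  obtain ⟨⟨μ, yd⟩, ⟨⟨hμ0, hμM⟩, d', hd', hTd'⟩, hyeq⟩ := hyK
  dsimp only at hyeq hμ0 hμM hTd'
  have hy' : y = T (μ • d') := by rw [← hyeq, ← hTd', map_smul]
  have hz' : z = cz + μ • d' := by
    have hTz : T z = T (cz + μ • d') := by
      rw [map_add, ← hy', hczeq]
      module
    exact T.injective hTz
  have hlam : μ • d' ∈ LambdaD D := by
    rcases hμ0.eq_or_lt with h | h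
    · left; rw [Set.mem_singleton_iff, ← h, zero_smul]
    · right; exact ⟨μ, h, d', hd', rfl⟩
  rw [hz']
  exact Set.add_mem_add hcz hlam
end

section
/- Let E be a real Banach space and D a nonempty bounded subset of E with the following property: for every bounded subset B of E, if every x* ∈ L_D(E*,E) := {x* ∈ E* : sup_{d ∈ D} ⟨x*,d⟩ < 0} attains its supremum on B, then B is weakly relatively compact. Then D itself is weakly relatively compact. -/
open Filter Topology

/-- Final remark: let `D` be a nonempty bounded subset of a Banach space `E` with the
property that every bounded set `B ⊆ E` on which all functionals of
`L_D(E*, E) = {x* : sup_{d ∈ D} ⟨x*, d⟩ < 0}` attain their suprema is weakly relatively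
compact. Then `D` itself is weakly relatively compact. -/
theorem obstacle_is_weakly_relatively_compact
    {E : Type*} [NormedAddCommGroup E] [NormedSpace ℝ E] [CompleteSpace E]
    (D : Set E) (hDne : D.Nonempty) (hDb : Bornology.IsBounded D)
    (hprop : ∀ B : Set E, Bornology.IsBounded B →
      (∀ x' : StrongDual ℝ E, (∃ r < (0 : ℝ), ∀ d ∈ D, x' d ≤ r) →
        ∃ b₀ ∈ B, ∀ b ∈ B, x' b ≤ x' b₀) →
      IsCompact (closure (toWeakSpace ℝ E '' B))) :
    IsCompact (closure (toWeakSpace ℝ E '' D)) := by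
  have hB : IsCompact (closure (toWeakSpace ℝ E '' insert 0 D)) := by
    refine hprop _ (hDb.insert 0) ?_
    rintro x' ⟨r, hr, h⟩
    refine ⟨0, Set.mem_insert _ _, ?_⟩
    rintro b (rfl | hb)
    · exact le_refl _
    · rw [map_zero]; exact le_trans (h b hb) (le_of_lt hr)
  refine hB.of_isClosed_subset isClosed_closure ?_
  exact closure_mono (Set.image_mono (Set.subset_insert 0 D))
end

section
/- Let E be a real Banach space, C a weak*-closed convex subset of E*, and D a nonempty bounded weak*-closed convex subset of E* such that there exists y ∈ L_D with sup{⟨y,c*⟩ : c* ∈ C} < +∞. Then every x₀* ∈ C can be written as x₀* = x₁* + λ₁ d₁* with λ₁ ≥ 0, d₁* ∈ D and x₁* ∈ C such that for every ε > 0 the set x₁* − εD := {x₁* − ε d* : d* ∈ D} has empty intersection with C. -/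
open Filter Topology

/-- Decomposition step of the one-side Bishop–Phelps theorem: if `C`, `D` are weak*-closed
convex subsets of `E*`, `D` nonempty and bounded, and some `y ∈ L_D` has
`sup(y, C) < +∞`, then every `x₀* ∈ C` can be written as `x₀* = x₁* + λ₁ d₁*` with
`λ₁ ≥ 0`, `d₁* ∈ D`, `x₁* ∈ C`, and `(x₁* - εD) ∩ C = ∅` for every `ε > 0`. -/
theorem one_side_bishop_phelps_decomposition
    {E : Type*} [NormedAddCommGroup E] [NormedSpace ℝ E] [CompleteSpace E]
    (C D : Set (StrongDual ℝ E))
    (hCcl : IsClosed (StrongDual.toWeakDual '' C)) (hCconv : Convex ℝ C)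
    (hDcl : IsClosed (StrongDual.toWeakDual '' D)) (hDconv : Convex ℝ D)
    (hDne : D.Nonempty) (hDb : Bornology.IsBounded D)
    (hy : ∃ y ∈ LD D, ∃ r : ℝ, ∀ c ∈ C, c y ≤ r) :
    ∀ x₀ ∈ C, ∃ x₁ ∈ C, ∃ l₁ : ℝ, 0 ≤ l₁ ∧ ∃ d₁ ∈ D,
      x₀ = x₁ + l₁ • d₁ ∧ ∀ ε > (0 : ℝ), ∀ d ∈ D, x₁ - ε • d ∉ C := by
  obtain ⟨y, ⟨r₀, hr₀, hDy⟩, r, hCr⟩ := hy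
  intro x₀ hx₀
  set τ : StrongDual ℝ E ≃ₗ[ℝ] WeakDual ℝ E := StrongDual.toWeakDual with hτ
  -- D' compact in WeakDual
  have hDb' : Bornology.IsBounded (StrongDual.toWeakDual ⁻¹' (τ '' D)) := by
    have : StrongDual.toWeakDual ⁻¹' (τ '' D) = D := by
      ext z; simp [hτ, τ.injective.mem_set_image]
    rwa [this]
  have hDcpt : IsCompact (τ '' D) := WeakDual.isCompact_of_bounded_of_closed hDb' hDcl
  -- the set T
  set M : ℝ := (r - x₀ y) / (-r₀) with hM
  set T : Set ℝ := {t : ℝ | 0 ≤ t ∧ ∃ d ∈ D, x₀ - t • d ∈ C} with hT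
  obtain ⟨d₀, hd₀⟩ := hDne
  have hT0 : (0 : ℝ) ∈ T := ⟨le_refl 0, d₀, hd₀, by simpa using hx₀⟩
  have hTsub : T ⊆ Set.Icc 0 M := by
    rintro t ⟨ht0, d, hd, hmem⟩
    refine ⟨ht0, ?_⟩
    have h1 : (x₀ - t • d) y ≤ r := hCr _ hmem
    have h2 : d y ≤ r₀ := hDy d hd
    have h3 : x₀ y - t * d y ≤ r := by
      simpa [ContinuousLinearMap.sub_apply, ContinuousLinearMap.smul_apply,
        smul_eq_mul] using h1
    rw [hM, le_div_iff₀ (by linarith)]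
    nlinarith
  -- compactness of T
  have hcont : Continuous fun p : ℝ × WeakDual ℝ E => τ x₀ - p.1 • p.2 :=
    continuous_const.sub (continuous_fst.smul continuous_snd)
  have hKcpt : IsCompact ((Set.Icc (0:ℝ) M ×ˢ (τ '' D)) ∩
      {p : ℝ × WeakDual ℝ E | τ x₀ - p.1 • p.2 ∈ τ '' C}) :=
    ((isCompact_Icc).prod hDcpt).inter_right (hCcl.preimage hcont)
  have hTeq : T = Prod.fst '' ((Set.Icc (0:ℝ) M ×ˢ (τ '' D)) ∩
      {p : ℝ × WeakDual ℝ E | τ x₀ - p.1 • p.2 ∈ τ '' C}) := by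
    ext t
    constructor
    · intro ht
      obtain ⟨ht0, d, hd, hmem⟩ := ht
      refine ⟨(t, τ d), ⟨⟨hTsub ⟨ht0, d, hd, hmem⟩, ⟨d, hd, rfl⟩⟩, ?_⟩, rfl⟩
      have heq : τ x₀ - t • τ d = τ (x₀ - t • d) := by
        simp [map_sub, map_smul]
      show τ x₀ - t • τ d ∈ τ '' C
      rw [heq]
      exact ⟨_, hmem, rfl⟩
    · rintro ⟨⟨t', w⟩, ⟨⟨⟨ht0, _⟩, ⟨d, hd, rfl⟩⟩, hmem⟩, rfl⟩
      refine ⟨ht0, d, hd, ?_⟩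
      have hmem' : τ x₀ - t' • τ d ∈ τ '' C := hmem
      have heq : τ x₀ - t' • τ d = τ (x₀ - t' • d) := by simp [map_sub, map_smul]
      rw [heq] at hmem'
      obtain ⟨c, hc, hceq⟩ := hmem'
      rwa [← τ.injective hceq]
  have hTcpt : IsCompact T := hTeq ▸ hKcpt.image continuous_fst
  have hTne : T.Nonempty := ⟨0, hT0⟩
  set l₁ : ℝ := sSup T with hl₁
  have hl₁T : l₁ ∈ T := hTcpt.sSup_mem hTne
  obtain ⟨hl₁0, d₁, hd₁, hx₁C⟩ := hl₁T
  refine ⟨x₀ - l₁ • d₁, hx₁C, l₁, hl₁0, d₁, hd₁, by abel, ?_⟩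
  intro ε hε d hd hmem
  -- contradiction: l₁ + ε ∈ T
  have htne : l₁ + ε ≠ 0 := by positivity
  set d' := (l₁ / (l₁ + ε)) • d₁ + (ε / (l₁ + ε)) • d with hd'
  have hd'D : d' ∈ D := hDconv hd₁ hd (by positivity) (by positivity)
    (by field_simp)
  have hkey : x₀ - (l₁ + ε) • d' = x₀ - l₁ • d₁ - ε • d := by
    rw [hd', smul_add, smul_smul, smul_smul, mul_div_cancel₀ _ htne,
      mul_div_cancel₀ _ htne]
    abel
  have : l₁ + ε ∈ T := ⟨by positivity, d', hd'D, by rw [hkey]; exact hmem⟩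
  have hle : l₁ + ε ≤ l₁ := le_csSup (hTcpt.bddAbove) this
  linarith
end
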